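/- arXiv:1310.5715 — 6 statements merged into one kernel-verified Lean document; each statement's English description precedes it below -/
import Mathlib

section
/- For a single SGD step x' = x - γ∇f_i(x) with i drawn from distribution D, if each f_i is convex with L_i-Lipschitz gradient, L_i ≤ supL almost surely, F(x) = E_i[f_i(x)] is μ-strongly convex with minimizer x⋆, σ² = E_i‖∇f_i(x⋆)‖², and 0 < γ ≤ 1/supL, then E_i‖x' - x⋆‖² ≤ (1 - 2γμ(1 - γ·supL))‖x - x⋆‖² + 2γ²σ². -/
open scoped RealInnerProductSpace BigOperators

section Helpers

variable {E : Type*} [NormedAddCommGroup E] [InnerProductSpace ℝ E] [CompleteSpace E]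

lemma sgd_hasDerivAt_line (f : E → ℝ) (hf : Differentiable ℝ f) (x v : E) (t : ℝ) :
    HasDerivAt (fun s : ℝ => f (x + s • v)) ⟪gradient f (x + t • v), v⟫ t := by
  have hline : HasDerivAt (fun s : ℝ => x + s • v) v t := by
    simpa using ((hasDerivAt_id t).smul_const v).const_add x
  have hg := (hf (x + t • v)).hasGradientAt
  rw [hasGradientAt_iff_hasFDerivAt] at hg
  have := hg.comp_hasDerivAt t hline
  simpa [InnerProductSpace.toDual_apply_apply, Function.comp_def] using this

lemma sgd_convex_first_order (f : E → ℝ) (hc : ConvexOn ℝ Set.univ f) (hf : Differentiable ℝ f)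
    (x y : E) : f x + ⟪gradient f x, y - x⟫ ≤ f y := by
  have hgc : ConvexOn ℝ Set.univ (fun t : ℝ => f (x + t • (y - x))) := by
    have h := hc.comp_affineMap (AffineMap.lineMap x y : ℝ →ᵃ[ℝ] E)
    have he : (f ∘ (AffineMap.lineMap x y : ℝ →ᵃ[ℝ] E)) = fun t : ℝ => f (x + t • (y - x)) := by
      funext t
      simp [AffineMap.lineMap_apply, add_comm]
    rw [he] at h
    simpa using h
  have hd : HasDerivAt (fun t : ℝ => f (x + t • (y - x))) ⟪gradient f x, y - x⟫ 0 := by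
    simpa using sgd_hasDerivAt_line f hf x (y - x) 0
  have h := hgc.le_slope_of_hasDerivAt (Set.mem_univ (0:ℝ)) (Set.mem_univ (1:ℝ)) one_pos hd
  rw [slope_def_field] at h
  simp only [div_one, one_smul, zero_smul, add_zero] at h
  have : x + (y - x) = y := by abel
  rw [this] at h
  simp only [slope, sub_zero] at h
  linarith [h]

lemma sgd_descent_lemma (f : E → ℝ) (hf : Differentiable ℝ f) (K : ℝ) (_hK : 0 ≤ K)
    (hlip : ∀ a b, ‖gradient f a - gradient f b‖ ≤ K * ‖a - b‖) (x y : E) :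
    f y ≤ f x + ⟪gradient f x, y - x⟫ + K / 2 * ‖y - x‖ ^ 2 := by
  set v := y - x with hv
  set c : ℝ := ⟪gradient f x, v⟫ with hcdef
  set b : ℝ := K / 2 * ‖v‖ ^ 2 with hbdef
  set h : ℝ → ℝ := fun t => f (x + t • v) - c * t - b * t ^ 2 with hh
  have hde : ∀ t : ℝ, HasDerivAt h (⟪gradient f (x + t • v), v⟫ - c - b * (2 * t)) t := by
    intro t
    have h1 := sgd_hasDerivAt_line f hf x v t
    have h2 : HasDerivAt (fun t : ℝ => c * t) c t := by
      simpa using (hasDerivAt_id t).const_mul c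
    have h3 : HasDerivAt (fun t : ℝ => b * t ^ 2) (b * (2 * t)) t := by
      simpa using (hasDerivAt_pow 2 t).const_mul b
    exact (h1.sub h2).sub h3
  have hmono : AntitoneOn h (Set.Icc (0:ℝ) 1) := by
    apply antitoneOn_of_deriv_nonpos (convex_Icc 0 1)
    · exact fun t _ => ((hde t).differentiableAt.continuousAt).continuousWithinAt
    · intro t ht
      exact ((hde t).differentiableAt).differentiableWithinAt
    · intro t ht
      rw [interior_Icc] at ht
      rw [(hde t).deriv]
      have hcs : ⟪gradient f (x + t • v), v⟫ - c ≤ ‖gradient f (x + t • v) - gradient f x‖ * ‖v‖ := by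
        rw [hcdef, ← inner_sub_left]
        exact real_inner_le_norm _ _
      have hl : ‖gradient f (x + t • v) - gradient f x‖ ≤ K * (t * ‖v‖) := by
        have := hlip (x + t • v) x
        simpa [norm_smul, abs_of_pos ht.1, mul_assoc] using this
      have hb : b * (2 * t) = K * (t * ‖v‖) * ‖v‖ := by rw [hbdef]; ring
      nlinarith [norm_nonneg v, mul_le_mul_of_nonneg_right hl (norm_nonneg v)]
  have hfin := hmono (Set.mem_Icc.mpr ⟨le_refl 0, zero_le_one⟩)
      (Set.mem_Icc.mpr ⟨zero_le_one, le_refl 1⟩) zero_le_one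
  have h0 : h 0 = f x := by simp [hh]
  have h1 : h 1 = f y - c - b := by
    have hxy : x + (1:ℝ) • v = y := by rw [hv]; simp
    simp only [hh, hxy, mul_one, one_pow]
  rw [h0, h1] at hfin
  rw [hbdef, hcdef] at hfin
  linarith

lemma sgd_coco_half (f : E → ℝ) (hc : ConvexOn ℝ Set.univ f) (hf : Differentiable ℝ f)
    (K : ℝ) (hK : 0 < K) (hlip : ∀ a b, ‖gradient f a - gradient f b‖ ≤ K * ‖a - b‖)
    (x y : E) :
    f x + ⟪gradient f x, y - x⟫ + 1 / (2 * K) * ‖gradient f y - gradient f x‖ ^ 2 ≤ f y := by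
  set g := gradient f x with hg
  set Δ := gradient f y - g with hΔ
  set z := y - (1 / K) • Δ with hz
  have hB := sgd_convex_first_order f hc hf x z
  have hC := sgd_descent_lemma f hf K hK.le hlip y z
  have h1 : ⟪g, z - x⟫ = ⟪g, y - x⟫ - (1 / K) * ⟪g, Δ⟫ := by
    have : z - x = (y - x) - (1 / K) • Δ := by rw [hz]; abel
    rw [this, inner_sub_right, real_inner_smul_right]
  have h2 : ⟪gradient f y, z - y⟫ = -((1 / K) * ⟪gradient f y, Δ⟫) := by
    have : z - y = -((1 / K) • Δ) := by rw [hz]; abel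
    rw [this, inner_neg_right, real_inner_smul_right]
  have h3 : ‖z - y‖ ^ 2 = (1 / K) ^ 2 * ‖Δ‖ ^ 2 := by
    have : z - y = -((1 / K) • Δ) := by rw [hz]; abel
    rw [this, norm_neg, norm_smul]
    simp [abs_of_pos (by positivity : (0:ℝ) < 1 / K), mul_pow]
  have h4 : ⟪gradient f y, Δ⟫ - ⟪g, Δ⟫ = ‖Δ‖ ^ 2 := by
    rw [← inner_sub_left, ← hΔ, real_inner_self_eq_norm_sq]
  have hK' : K ≠ 0 := ne_of_gt hK
  rw [h1] at hB
  rw [h2, h3] at hC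
  have e : K / 2 * ((1 / K) ^ 2 * ‖Δ‖ ^ 2) = 1 / (2 * K) * ‖Δ‖ ^ 2 := by
    field_simp
  have h4' : 1 / K * ⟪gradient f y, Δ⟫ - 1 / K * ⟪g, Δ⟫ = 1 / K * ‖Δ‖ ^ 2 := by
    rw [← mul_sub, h4]
  have e2 : 1 / (2 * K) * ‖Δ‖ ^ 2 + 1 / (2 * K) * ‖Δ‖ ^ 2 = 1 / K * ‖Δ‖ ^ 2 := by
    field_simp; ring
  linarith

lemma sgd_cocoercive (f : E → ℝ) (hc : ConvexOn ℝ Set.univ f) (hf : Differentiable ℝ f)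
    (K : ℝ) (hK : 0 < K) (hlip : ∀ a b, ‖gradient f a - gradient f b‖ ≤ K * ‖a - b‖)
    (x y : E) :
    ‖gradient f x - gradient f y‖ ^ 2 ≤ K * ⟪x - y, gradient f x - gradient f y⟫ := by
  have h1 := sgd_coco_half f hc hf K hK hlip x y
  have h2 := sgd_coco_half f hc hf K hK hlip y x
  have hsymm : ‖gradient f y - gradient f x‖ = ‖gradient f x - gradient f y‖ := norm_sub_rev _ _
  rw [hsymm] at h1
  have hin : ⟪gradient f x, y - x⟫ + ⟪gradient f y, x - y⟫ =
      -⟪x - y, gradient f x - gradient f y⟫ := by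
    simp only [inner_sub_left, inner_sub_right]
    rw [real_inner_comm x (gradient f x), real_inner_comm x (gradient f y),
      real_inner_comm y (gradient f x), real_inner_comm y (gradient f y)]
    ring
  have e2 : 1 / (2 * K) * ‖gradient f x - gradient f y‖ ^ 2 +
      1 / (2 * K) * ‖gradient f x - gradient f y‖ ^ 2 =
      1 / K * ‖gradient f x - gradient f y‖ ^ 2 := by
    field_simp; ring
  have hs : 1 / K * ‖gradient f x - gradient f y‖ ^ 2 ≤
      ⟪x - y, gradient f x - gradient f y⟫ := by linarith
  calc ‖gradient f x - gradient f y‖ ^ 2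
      = K * (1 / K * ‖gradient f x - gradient f y‖ ^ 2) := by field_simp
    _ ≤ K * ⟪x - y, gradient f x - gradient f y⟫ :=
        mul_le_mul_of_nonneg_left hs hK.le

lemma sgd_hasGradientAt_weighted_sum {n : ℕ} (p : Fin n → ℝ) (f : Fin n → E → ℝ)
    (hdiff : ∀ i, Differentiable ℝ (f i)) (y : E) :
    HasGradientAt (fun z => ∑ i, p i * f i z) (∑ i, p i • gradient (f i) y) y := by
  rw [hasGradientAt_iff_hasFDerivAt]
  have hi : ∀ i : Fin n, HasFDerivAt (fun z => p i * f i z)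
      (p i • (InnerProductSpace.toDual ℝ E (gradient (f i) y))) y := by
    intro i
    have h := (hdiff i y).hasGradientAt
    rw [hasGradientAt_iff_hasFDerivAt] at h
    exact h.const_mul (p i)
  have hs := HasFDerivAt.fun_sum (fun i (_ : i ∈ Finset.univ) => hi i)
  convert hs using 1
  · rfl
  · rfl
  · simp [map_sum, map_smul]

end Helpers

set_option maxHeartbeats 1000000 in
/-- One-step SGD contraction bound (Theorem 2.1, single step). -/
theorem stmt2 {d n : ℕ} (hn : 0 < n)
    (f : Fin n → EuclideanSpace ℝ (Fin d) → ℝ)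
    (L : Fin n → ℝ) (supL μ γ : ℝ)
    (p : Fin n → ℝ) (hp : ∀ i, 0 ≤ p i) (hps : ∑ i, p i = 1)
    (hconv : ∀ i, ConvexOn ℝ Set.univ (f i))
    (hdiff : ∀ i, Differentiable ℝ (f i))
    (hlip : ∀ i x y, ‖gradient (f i) x - gradient (f i) y‖ ≤ L i * ‖x - y‖)
    (hLsup : ∀ i, L i ≤ supL) (hsupL : 0 < supL)
    (F : EuclideanSpace ℝ (Fin d) → ℝ) (hF : F = fun x => ∑ i, p i * f i x)
    (hμ : 0 < μ)
    (hsc : ∀ x y, μ * ‖x - y‖ ^ 2 ≤ ⟪x - y, gradient F x - gradient F y⟫)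
    (xstar : EuclideanSpace ℝ (Fin d)) (hmin : ∀ x, F xstar ≤ F x)
    (σ2 : ℝ) (hσ2 : σ2 = ∑ i, p i * ‖gradient (f i) xstar‖ ^ 2)
    (hγ0 : 0 < γ) (hγ : γ ≤ 1 / supL)
    (x : EuclideanSpace ℝ (Fin d)) :
    ∑ i, p i * ‖(x - γ • gradient (f i) x) - xstar‖ ^ 2 ≤
      (1 - 2 * γ * μ * (1 - γ * supL)) * ‖x - xstar‖ ^ 2 + 2 * γ ^ 2 * σ2 := by
  -- gradient of F
  have hgradF : ∀ y, gradient F y = ∑ i, p i • gradient (f i) y := by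
    intro y
    rw [hF]
    exact (sgd_hasGradientAt_weighted_sum p f hdiff y).gradient
  -- gradient of F at the minimizer is zero
  have hstar : (∑ i, p i • gradient (f i) xstar) = 0 := by
    have hlm : IsLocalMin F xstar := Filter.Eventually.of_forall hmin
    have hfd0 : fderiv ℝ F xstar = 0 := hlm.fderiv_eq_zero
    have hG : HasGradientAt F (∑ i, p i • gradient (f i) xstar) xstar := by
      rw [hF]; exact sgd_hasGradientAt_weighted_sum p f hdiff xstar
    rw [hasGradientAt_iff_hasFDerivAt] at hG
    have := hG.fderiv
    rw [hfd0] at this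
    have h0 := congrArg (InnerProductSpace.toDual ℝ (EuclideanSpace ℝ (Fin d))).symm this
    simpa [gradient] using h0.symm
  set a := x - xstar with ha
  set S : ℝ := ⟪a, ∑ i, p i • gradient (f i) x⟫ with hS
  clear_value S
  have hS1 : ∑ i, p i * ⟪a, gradient (f i) x⟫ = S := by
    rw [hS, inner_sum]
    exact Finset.sum_congr rfl fun i _ => (real_inner_smul_right a (gradient (f i) x) (p i)).symm
  have hS0 : ∑ i, p i * ⟪a, gradient (f i) xstar⟫ = 0 := by
    have : ∑ i, p i * ⟪a, gradient (f i) xstar⟫ = ⟪a, ∑ i, p i • gradient (f i) xstar⟫ := by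
      rw [inner_sum]
      exact Finset.sum_congr rfl fun i _ =>
        (real_inner_smul_right a (gradient (f i) xstar) (p i)).symm
    rw [this, hstar, inner_zero_right]
  have hS2 : ∑ i, p i * ⟪a, gradient (f i) x - gradient (f i) xstar⟫ = S := by
    have : ∀ i : Fin n, p i * ⟪a, gradient (f i) x - gradient (f i) xstar⟫ =
        p i * ⟪a, gradient (f i) x⟫ - p i * ⟪a, gradient (f i) xstar⟫ := by
      intro i; rw [inner_sub_right]; ring
    rw [Finset.sum_congr rfl fun i _ => this i, Finset.sum_sub_distrib, hS1, hS0, sub_zero]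
  -- strong convexity gives μ‖a‖² ≤ S
  have hscS : μ * ‖a‖ ^ 2 ≤ S := by
    have h := hsc x xstar
    rw [hgradF, hgradF, hstar, sub_zero] at h
    rw [hS, ha]
    exact h
  -- per-index Lipschitz with supL and cocoercivity
  have hlip' : ∀ i : Fin n, ∀ u v, ‖gradient (f i) u - gradient (f i) v‖ ≤ supL * ‖u - v‖ := by
    intro i u v
    exact (hlip i u v).trans (mul_le_mul_of_nonneg_right (hLsup i) (norm_nonneg _))
  have hcoco : ∀ i : Fin n, ‖gradient (f i) x - gradient (f i) xstar‖ ^ 2 ≤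
      supL * ⟪a, gradient (f i) x - gradient (f i) xstar⟫ := fun i =>
    sgd_cocoercive (f i) (hconv i) (hdiff i) supL hsupL (hlip' i) x xstar
  -- bound on ‖gradient f i x‖²
  have hnormg : ∀ i : Fin n, ‖gradient (f i) x‖ ^ 2 ≤
      2 * supL * ⟪a, gradient (f i) x - gradient (f i) xstar⟫ +
      2 * ‖gradient (f i) xstar‖ ^ 2 := by
    intro i
    have h1 : ‖gradient (f i) x‖ ≤ ‖gradient (f i) x - gradient (f i) xstar‖ +
        ‖gradient (f i) xstar‖ := by
      have := norm_add_le (gradient (f i) x - gradient (f i) xstar) (gradient (f i) xstar)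
      simpa using this
    nlinarith [hcoco i, norm_nonneg (gradient (f i) x - gradient (f i) xstar),
      norm_nonneg (gradient (f i) xstar), norm_nonneg (gradient (f i) x),
      sq_nonneg (‖gradient (f i) x - gradient (f i) xstar‖ - ‖gradient (f i) xstar‖)]
  -- per-index bound on the step
  have hterm : ∀ i : Fin n, p i * ‖(x - γ • gradient (f i) x) - xstar‖ ^ 2 ≤
      p i * ‖a‖ ^ 2 - 2 * γ * (p i * ⟪a, gradient (f i) x⟫) +
      2 * γ ^ 2 * supL * (p i * ⟪a, gradient (f i) x - gradient (f i) xstar⟫) +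
      2 * γ ^ 2 * (p i * ‖gradient (f i) xstar‖ ^ 2) := by
    intro i
    have hrw : (x - γ • gradient (f i) x) - xstar = a - γ • gradient (f i) x := by
      rw [ha]; abel
    have hexp : ‖(x - γ • gradient (f i) x) - xstar‖ ^ 2 =
        ‖a‖ ^ 2 - 2 * (γ * ⟪a, gradient (f i) x⟫) + γ ^ 2 * ‖gradient (f i) x‖ ^ 2 := by
      rw [hrw, norm_sub_sq_real, real_inner_smul_right, norm_smul]
      rw [mul_pow]
      rw [Real.norm_eq_abs, sq_abs]
    rw [hexp]
    have hb := hnormg i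
    have hmul := mul_le_mul_of_nonneg_left hb (mul_nonneg (sq_nonneg γ) (hp i))
    nlinarith [hmul, hp i]
  -- sum everything
  have hsum : ∑ i, p i * ‖(x - γ • gradient (f i) x) - xstar‖ ^ 2 ≤
      ‖a‖ ^ 2 - 2 * γ * S + 2 * γ ^ 2 * supL * S + 2 * γ ^ 2 * σ2 := by
    calc ∑ i, p i * ‖(x - γ • gradient (f i) x) - xstar‖ ^ 2
        ≤ ∑ i, (p i * ‖a‖ ^ 2 - 2 * γ * (p i * ⟪a, gradient (f i) x⟫) +
            2 * γ ^ 2 * supL * (p i * ⟪a, gradient (f i) x - gradient (f i) xstar⟫) +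
            2 * γ ^ 2 * (p i * ‖gradient (f i) xstar‖ ^ 2)) :=
          Finset.sum_le_sum fun i _ => hterm i
      _ = ‖a‖ ^ 2 - 2 * γ * S + 2 * γ ^ 2 * supL * S + 2 * γ ^ 2 * σ2 := by
          simp only [Finset.sum_add_distrib, Finset.sum_sub_distrib, ← Finset.mul_sum,
            ← Finset.sum_mul]
          rw [hps, hS1, hS2, hσ2]
          ring
  -- finish using strong convexity and the step-size condition
  have hγs : γ * supL ≤ 1 := (le_div_iff₀ hsupL).mp hγ
  have hfinal : ‖a‖ ^ 2 - 2 * γ * S + 2 * γ ^ 2 * supL * S + 2 * γ ^ 2 * σ2 ≤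
      (1 - 2 * γ * μ * (1 - γ * supL)) * ‖a‖ ^ 2 + 2 * γ ^ 2 * σ2 := by
    nlinarith [mul_nonneg (mul_nonneg hγ0.le (sub_nonneg.mpr hγs)) (sub_nonneg.mpr hscS)]
  calc ∑ i, p i * ‖(x - γ • gradient (f i) x) - xstar‖ ^ 2
      ≤ ‖a‖ ^ 2 - 2 * γ * S + 2 * γ ^ 2 * supL * S + 2 * γ ^ 2 * σ2 := hsum
    _ ≤ (1 - 2 * γ * μ * (1 - γ * supL)) * ‖a‖ ^ 2 + 2 * γ ^ 2 * σ2 := hfinal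
end

section
/- Under the assumptions of the single-step SGD contraction bound, the SGD iterates x_{k+1} = x_k - γ∇f_{i_k}(x_k) with i.i.d. indices i_k ∼ D and step size γ < 1/supL satisfy E‖x_k - x⋆‖² ≤ (1 - 2γμ(1 - γ·supL))^k ‖x_0 - x⋆‖² + γσ²/(μ(1 - γ·supL)). -/
open scoped RealInnerProductSpace

section helpers
variable {H : Type*} [NormedAddCommGroup H] [InnerProductSpace ℝ H] [CompleteSpace H]

lemma fderiv_apply_eq_inner_gradient {f : H → ℝ} {x : H} (hf : DifferentiableAt ℝ f x) (v : H) :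
    fderiv ℝ f x v = ⟪gradient f x, v⟫ := by
  have h := hf.hasGradientAt
  rw [hasGradientAt_iff_hasFDerivAt] at h
  rw [h.fderiv]
  simp [InnerProductSpace.toDual_apply_apply]

lemma hasDerivAt_line (f : H → ℝ) (hf : Differentiable ℝ f) (x v : H) (t : ℝ) :
    HasDerivAt (fun s : ℝ => f (x + s • v)) ⟪gradient f (x + t • v), v⟫ t := by
  have hline : HasDerivAt (fun s : ℝ => x + s • v) v t := by
    simpa using ((hasDerivAt_id t).smul_const v).const_add x
  have h := (hf (x + t • v)).hasFDerivAt.comp_hasDerivAt t hline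
  rwa [fderiv_apply_eq_inner_gradient (hf _)] at h

lemma first_order_ineq {f : H → ℝ} (hc : ConvexOn ℝ Set.univ f) (hf : Differentiable ℝ f)
    (x y : H) : ⟪gradient f x, y - x⟫ ≤ f y - f x := by
  set v := y - x with hv
  have hgconv : ConvexOn ℝ Set.univ (fun s : ℝ => f (x + s • v)) := by
    have := hc.comp_affineMap (AffineMap.lineMap x y : ℝ →ᵃ[ℝ] H)
    simpa [Function.comp_def, AffineMap.lineMap_apply, add_comm, Set.preimage_univ] using this
  have hder := hasDerivAt_line f hf x v 0
  have hslope := hgconv.le_slope_of_hasDerivAt (Set.mem_univ 0) (Set.mem_univ 1)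
    one_pos (by simpa using hder)
  have : slope (fun s : ℝ => f (x + s • v)) 0 1 = f y - f x := by
    simp [slope_def_field, hv]
  simpa [this] using hslope

lemma descent_lemma {f : H → ℝ} {C : ℝ} (_hC : 0 ≤ C) (hf : Differentiable ℝ f)
    (hl : ∀ a b, ‖gradient f a - gradient f b‖ ≤ C * ‖a - b‖) (x y : H) :
    f y ≤ f x + ⟪gradient f x, y - x⟫ + C / 2 * ‖y - x‖ ^ 2 := by
  set v := y - x with hv
  set φ : ℝ → ℝ := fun t => f (x + t • v) - t * ⟪gradient f x, v⟫ - C / 2 * t ^ 2 * ‖v‖ ^ 2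
    with hφ
  have hder : ∀ t : ℝ, HasDerivAt φ
      (⟪gradient f (x + t • v), v⟫ - ⟪gradient f x, v⟫ - C * t * ‖v‖ ^ 2) t := by
    intro t
    have h1 := hasDerivAt_line f hf x v t
    have h2 : HasDerivAt (fun t : ℝ => t * ⟪gradient f x, v⟫) ⟪gradient f x, v⟫ t := by
      simpa using (hasDerivAt_id t).mul_const ⟪gradient f x, v⟫
    have h3 : HasDerivAt (fun t : ℝ => C / 2 * t ^ 2 * ‖v‖ ^ 2) (C * t * ‖v‖ ^ 2) t := by
      have : HasDerivAt (fun t : ℝ => t ^ 2) (2 * t) t := by simpa using hasDerivAt_pow 2 t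
      have := (this.const_mul (C / 2)).mul_const (‖v‖ ^ 2)
      rw [show C * t * ‖v‖ ^ 2 = C / 2 * (2 * t) * ‖v‖ ^ 2 by ring]
      exact this
    exact (h1.sub h2).sub h3
  have hmono : AntitoneOn φ (Set.Icc (0 : ℝ) 1) := by
    apply antitoneOn_of_deriv_nonpos (convex_Icc 0 1)
    · exact fun t _ => ((hder t).differentiableAt).continuousAt.continuousWithinAt
    · intro t ht
      exact ((hder t).differentiableAt).differentiableWithinAt
    · intro t ht
      rw [interior_Icc] at ht
      rw [(hder t).deriv]
      have hb : ⟪gradient f (x + t • v) - gradient f x, v⟫ ≤ C * t * ‖v‖ ^ 2 := by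
        calc ⟪gradient f (x + t • v) - gradient f x, v⟫
            ≤ ‖gradient f (x + t • v) - gradient f x‖ * ‖v‖ := real_inner_le_norm _ _
          _ ≤ C * ‖(x + t • v) - x‖ * ‖v‖ :=
              mul_le_mul_of_nonneg_right (hl _ _) (norm_nonneg _)
          _ = C * t * ‖v‖ ^ 2 := by
              rw [add_sub_cancel_left, norm_smul]
              simp [abs_of_pos ht.1]
              ring
      rw [inner_sub_left] at hb
      linarith
  have h01 := hmono (Set.mem_Icc.2 ⟨le_refl 0, zero_le_one⟩) (Set.mem_Icc.2 ⟨zero_le_one, le_refl 1⟩) zero_le_one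
  have hφ0 : φ 0 = f x := by simp [hφ]
  have hφ1 : φ 1 = f y - ⟪gradient f x, v⟫ - C / 2 * ‖v‖ ^ 2 := by
    simp [hφ, hv]
  rw [hφ0, hφ1] at h01
  linarith

end helpers

section coco
variable {H : Type*} [NormedAddCommGroup H] [InnerProductSpace ℝ H] [CompleteSpace H]

lemma half_coco {f : H → ℝ} {C : ℝ} (hC : 0 < C) (hc : ConvexOn ℝ Set.univ f)
    (hf : Differentiable ℝ f)
    (hl : ∀ a b, ‖gradient f a - gradient f b‖ ≤ C * ‖a - b‖) (x y : H) :
    ‖gradient f x - gradient f y‖ ^ 2 / (2 * C) ≤ f x - f y - ⟪gradient f y, x - y⟫ := by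
  set c := gradient f y with hcdef
  set φ : H → ℝ := fun z => f z - ⟪c, z⟫ with hφ
  have hφgrad : ∀ z, HasGradientAt φ (gradient f z - c) z := by
    intro z
    have h1 : HasFDerivAt f (InnerProductSpace.toDual ℝ H (gradient f z)) z := by
      rw [← hasGradientAt_iff_hasFDerivAt]; exact (hf z).hasGradientAt
    have h2 : HasFDerivAt (fun w : H => ⟪c, w⟫) (InnerProductSpace.toDual ℝ H c) z := by
      exact (InnerProductSpace.toDual ℝ H c).hasFDerivAt
    have h3 := h1.sub h2
    rw [hasFDerivAt_iff_hasGradientAt] at h3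
    simp at h3; exact h3
  have hφdiff : Differentiable ℝ φ := fun z => ((hφgrad z).differentiableAt)
  have hφg : gradient φ = fun z => gradient f z - c := funext fun z => (hφgrad z).gradient
  have hφconv : ConvexOn ℝ Set.univ φ := by
    apply hc.sub
    refine ⟨convex_univ, ?_⟩
    intro a _ b _ s t hs ht hst
    apply le_of_eq
    simp [inner_add_right, real_inner_smul_right]
  have hφlip : ∀ a b, ‖gradient φ a - gradient φ b‖ ≤ C * ‖a - b‖ := by
    intro a b; rw [hφg]; simpa using hl a b
  set w := gradient f x - c with hw
  -- minimum of φ at y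
  have hmin : ∀ z, φ y ≤ φ z := by
    intro z
    have := first_order_ineq hφconv hφdiff y z
    rw [hφg] at this
    simp [hcdef] at this
    linarith
  -- descent step from x
  set z := x - C⁻¹ • w with hz
  have hdesc := descent_lemma hC.le hφdiff hφlip x z
  rw [hφg] at hdesc
  have hz1 : z - x = -(C⁻¹ • w) := by rw [hz]; abel
  have hinner : ⟪gradient f x - c, z - x⟫ = -(C⁻¹ * ‖w‖ ^ 2) := by
    rw [← hw, hz1]
    rw [inner_neg_right, real_inner_smul_right, real_inner_self_eq_norm_sq]
  have hnorm : ‖z - x‖ ^ 2 = C⁻¹ ^ 2 * ‖w‖ ^ 2 := by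
    rw [hz1, norm_neg, norm_smul]
    rw [mul_pow]
    congr 1
    rw [Real.norm_eq_abs, sq_abs]
  have hkey : φ z ≤ φ x - ‖w‖ ^ 2 / (2 * C) := by
    rw [hinner, hnorm] at hdesc
    have hC' : C ≠ 0 := ne_of_gt hC
    calc φ z ≤ φ x + -(C⁻¹ * ‖w‖ ^ 2) + C / 2 * (C⁻¹ ^ 2 * ‖w‖ ^ 2) := hdesc
      _ = φ x - ‖w‖ ^ 2 / (2 * C) := by field_simp; ring
  have := (hmin z).trans hkey
  have hφx : φ x = f x - ⟪c, x⟫ := rfl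
  have hφy : φ y = f y - ⟪c, y⟫ := rfl
  rw [hφx, hφy] at this
  rw [inner_sub_right]
  rw [hw, hcdef] at this ⊢
  linarith

lemma coco {f : H → ℝ} {C : ℝ} (hC : 0 < C) (hc : ConvexOn ℝ Set.univ f)
    (hf : Differentiable ℝ f)
    (hl : ∀ a b, ‖gradient f a - gradient f b‖ ≤ C * ‖a - b‖) (x y : H) :
    ‖gradient f x - gradient f y‖ ^ 2 ≤ C * ⟪x - y, gradient f x - gradient f y⟫ := by
  have h1 := half_coco hC hc hf hl x y
  have h2 := half_coco hC hc hf hl y x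
  have hsymm : ‖gradient f y - gradient f x‖ = ‖gradient f x - gradient f y‖ := norm_sub_rev _ _
  rw [hsymm] at h2
  have hsum : ‖gradient f x - gradient f y‖ ^ 2 / C ≤
      ⟪x - y, gradient f x - gradient f y⟫ := by
    have hi : ⟪x - y, gradient f x - gradient f y⟫ =
        -⟪gradient f y, x - y⟫ - ⟪gradient f x, y - x⟫ := by
      rw [real_inner_comm, inner_sub_left]
      have : (y - x : H) = -(x - y) := by abel
      rw [this, inner_neg_right]
      ring
    rw [hi]
    have : ‖gradient f x - gradient f y‖ ^ 2 / C =
        ‖gradient f x - gradient f y‖ ^ 2 / (2 * C) + ‖gradient f x - gradient f y‖ ^ 2 / (2 * C) := by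
      field_simp; ring
    rw [this]
    linarith
  calc ‖gradient f x - gradient f y‖ ^ 2
      = C * (‖gradient f x - gradient f y‖ ^ 2 / C) := by field_simp
    _ ≤ C * ⟪x - y, gradient f x - gradient f y⟫ := by
        exact mul_le_mul_of_nonneg_left hsum hC.le

end coco

open scoped BigOperators

set_option maxHeartbeats 1600000 in
/-- Theorem 2.1: linear convergence of SGD with fixed step size, with linear
dependence on `sup L / μ`.  The expectation over the i.i.d. sampling of the
indices `i_0, …, i_{k-1}` is written explicitly as a sum over all index
sequences `s : Fin k → Fin n`, weighted by their product probability, where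
`traj k s` is the SGD iterate after `k` steps using the indices `s`. -/
theorem stmt3 {d n : ℕ} (hn : 0 < n)
    (f : Fin n → EuclideanSpace ℝ (Fin d) → ℝ)
    (L : Fin n → ℝ) (supL μ γ : ℝ)
    (p : Fin n → ℝ) (hp : ∀ i, 0 ≤ p i) (hps : ∑ i, p i = 1)
    (hconv : ∀ i, ConvexOn ℝ Set.univ (f i))
    (hdiff : ∀ i, Differentiable ℝ (f i))
    (hlip : ∀ i x y, ‖gradient (f i) x - gradient (f i) y‖ ≤ L i * ‖x - y‖)
    (hLsup : ∀ i, L i ≤ supL) (hsupL : 0 < supL)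
    (F : EuclideanSpace ℝ (Fin d) → ℝ) (hF : F = fun x => ∑ i, p i * f i x)
    (hμ : 0 < μ)
    (hsc : ∀ x y, μ * ‖x - y‖ ^ 2 ≤ ⟪x - y, gradient F x - gradient F y⟫)
    (xstar : EuclideanSpace ℝ (Fin d)) (hmin : ∀ x, F xstar ≤ F x)
    (σ2 : ℝ) (hσ2 : σ2 = ∑ i, p i * ‖gradient (f i) xstar‖ ^ 2)
    (hγ0 : 0 < γ) (hγ : γ < 1 / supL)
    (x0 : EuclideanSpace ℝ (Fin d))
    (traj : ∀ k : ℕ, (Fin k → Fin n) → EuclideanSpace ℝ (Fin d))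
    (htraj0 : ∀ s, traj 0 s = x0)
    (htrajS : ∀ k (s : Fin (k + 1) → Fin n),
      traj (k + 1) s = traj k (s ∘ Fin.castSucc) -
        γ • gradient (f (s (Fin.last k))) (traj k (s ∘ Fin.castSucc))) :
    ∀ k : ℕ,
      ∑ s : Fin k → Fin n, (∏ j, p (s j)) * ‖traj k s - xstar‖ ^ 2 ≤
        (1 - 2 * γ * μ * (1 - γ * supL)) ^ k * ‖x0 - xstar‖ ^ 2 +
          γ * σ2 / (μ * (1 - γ * supL)) := by
  subst hF
  set F : (EuclideanSpace ℝ (Fin d)) → ℝ := fun x => ∑ i, p i * f i x with hF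
  -- basic facts
  have hγs : γ * supL < 1 := (lt_div_iff₀ hsupL).mp hγ
  have hγsL : 0 < 1 - γ * supL := by linarith
  have hσ2nn : 0 ≤ σ2 := by
    rw [hσ2]; exact Finset.sum_nonneg fun i _ => mul_nonneg (hp i) (sq_nonneg _)
  have hRnn : 0 ≤ γ * σ2 / (μ * (1 - γ * supL)) :=
    div_nonneg (mul_nonneg hγ0.le hσ2nn) (mul_nonneg hμ.le hγsL.le)
  -- probability sums to one over trajectories
  have hsum1 : ∀ k : ℕ, ∑ s : Fin k → Fin n, ∏ j, p (s j) = 1 := by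
    intro k
    induction k with
    | zero => simp
    | succ k ih =>
      rw [← Equiv.sum_comp (Fin.snocEquiv (fun _ : Fin (k + 1) => Fin n))
        (fun s => ∏ j, p (s j)), Fintype.sum_prod_type]
      have hterm : ∀ (x : Fin n) (t : Fin k → Fin n),
          (∏ j : Fin (k + 1), p (Fin.snocEquiv (fun _ => Fin n) (x, t) j))
            = (∏ j, p (t j)) * p x := by
        intro x t
        rw [Fin.prod_univ_castSucc]
        simp [Fin.snocEquiv]
      calc ∑ x : Fin n, ∑ t : Fin k → Fin n,
            ∏ j : Fin (k + 1), p (Fin.snocEquiv (fun _ => Fin n) (x, t) j)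
          = ∑ x : Fin n, ∑ t : Fin k → Fin n, (∏ j, p (t j)) * p x := by
            apply Finset.sum_congr rfl; intro x _
            apply Finset.sum_congr rfl; intro t _
            exact hterm x t
        _ = ∑ x : Fin n, 1 * p x := by
            apply Finset.sum_congr rfl; intro x _
            rw [← Finset.sum_mul, ih]
        _ = 1 := by simp [hps]
  -- degenerate dimension
  rcases Nat.eq_zero_or_pos d with hd | hd
  · intro k
    have hzv : ∀ v : (EuclideanSpace ℝ (Fin d)), v = 0 := by
      intro v
      ext i
      exact absurd i.isLt (by omega)
    have hσ0 : σ2 = 0 := by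
      rw [hσ2]
      apply Finset.sum_eq_zero
      intro i _
      rw [hzv (gradient (f i) xstar)]
      simp
    have hL0 : ∀ s : Fin k → Fin n, ‖traj k s - xstar‖ ^ 2 = (0:ℝ) := by
      intro s; rw [hzv (traj k s - xstar)]; simp
    have hx0 : ‖x0 - xstar‖ ^ 2 = (0:ℝ) := by rw [hzv (x0 - xstar)]; simp
    calc ∑ s : Fin k → Fin n, (∏ j, p (s j)) * ‖traj k s - xstar‖ ^ 2
        = 0 := by
          apply Finset.sum_eq_zero; intro s _; rw [hL0 s, mul_zero]
      _ ≤ (1 - 2 * γ * μ * (1 - γ * supL)) ^ k * ‖x0 - xstar‖ ^ 2 +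
          γ * σ2 / (μ * (1 - γ * supL)) := by
          rw [hx0, hσ0]; simp
  -- gradient of F
  have hFgrad : ∀ x : (EuclideanSpace ℝ (Fin d)), HasGradientAt F (∑ i, p i • gradient (f i) x) x := by
    intro x
    have hi : ∀ i : Fin n, HasFDerivAt (fun x => p i * f i x)
        (p i • (InnerProductSpace.toDual ℝ (EuclideanSpace ℝ (Fin d)) (gradient (f i) x) : (EuclideanSpace ℝ (Fin d)) →L[ℝ] ℝ)) x := by
      intro i
      have h := (hdiff i x).hasGradientAt
      rw [hasGradientAt_iff_hasFDerivAt] at h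
      exact h.const_mul (p i)
    have hsum : HasFDerivAt F
        (∑ i, p i • (InnerProductSpace.toDual ℝ (EuclideanSpace ℝ (Fin d)) (gradient (f i) x) : (EuclideanSpace ℝ (Fin d)) →L[ℝ] ℝ)) x :=
      HasFDerivAt.fun_sum fun i _ => hi i
    rw [hasFDerivAt_iff_hasGradientAt] at hsum
    have : (InnerProductSpace.toDual ℝ (EuclideanSpace ℝ (Fin d))).symm
        (∑ i, p i • (InnerProductSpace.toDual ℝ (EuclideanSpace ℝ (Fin d)) (gradient (f i) x) : (EuclideanSpace ℝ (Fin d)) →L[ℝ] ℝ))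
        = ∑ i, p i • gradient (f i) x := by
      rw [map_sum]
      apply Finset.sum_congr rfl
      intro i _
      rw [LinearIsometryEquiv.map_smul, LinearIsometryEquiv.symm_apply_apply]
    rwa [this] at hsum
  have hFg : ∀ x : (EuclideanSpace ℝ (Fin d)), gradient F x = ∑ i, p i • gradient (f i) x :=
    fun x => (hFgrad x).gradient
  -- gradient at the minimizer vanishes
  have hF0 : (∑ i, p i • gradient (f i) xstar) = 0 := by
    have hlm : IsLocalMin F xstar := Filter.Eventually.of_forall hmin
    have h := hFgrad xstar
    rw [hasGradientAt_iff_hasFDerivAt] at h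
    have h0 := hlm.hasFDerivAt_eq_zero h
    have := congrArg (InnerProductSpace.toDual ℝ (EuclideanSpace ℝ (Fin d))).symm h0
    rwa [LinearIsometryEquiv.symm_apply_apply, map_zero] at this
  have hgradF0 : gradient F xstar = 0 := by rw [hFg, hF0]
  -- each gradient is supL-Lipschitz
  have hlip' : ∀ i a b, ‖gradient (f i) a - gradient (f i) b‖ ≤ supL * ‖a - b‖ :=
    fun i a b => (hlip i a b).trans (mul_le_mul_of_nonneg_right (hLsup i) (norm_nonneg _))
  have hco : ∀ i x, ‖gradient (f i) x - gradient (f i) xstar‖ ^ 2 ≤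
      supL * ⟪x - xstar, gradient (f i) x - gradient (f i) xstar⟫ :=
    fun i x => coco hsupL (hconv i) (hdiff i) (hlip' i) x xstar
  have hlipF : ∀ a b : (EuclideanSpace ℝ (Fin d)),
      ‖gradient F a - gradient F b‖ ≤ supL * ‖a - b‖ := by
    intro a b
    rw [hFg a, hFg b, ← Finset.sum_sub_distrib]
    calc ‖∑ i, (p i • gradient (f i) a - p i • gradient (f i) b)‖
        ≤ ∑ i, ‖p i • gradient (f i) a - p i • gradient (f i) b‖ := norm_sum_le _ _
      _ ≤ ∑ i, p i * (supL * ‖a - b‖) := by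
          apply Finset.sum_le_sum; intro i _
          rw [← smul_sub, norm_smul, Real.norm_eq_abs, abs_of_nonneg (hp i)]
          exact mul_le_mul_of_nonneg_left (hlip' i a b) (hp i)
      _ = supL * ‖a - b‖ := by rw [← Finset.sum_mul, hps, one_mul]
  have hμsupL : μ ≤ supL := by
    set u : (EuclideanSpace ℝ (Fin d)) := EuclideanSpace.single (⟨0, hd⟩ : Fin d) (1:ℝ) with hu
    have hun : ‖u - 0‖ = 1 := by rw [sub_zero, hu, EuclideanSpace.norm_single]; norm_num
    have h1 := hsc u 0
    have h2 := real_inner_le_norm (u - 0) (gradient F u - gradient F 0)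
    have h3 := hlipF u 0
    rw [hun] at h1 h2 h3
    nlinarith [h1, h2, h3]
  have hc0 : 0 ≤ 1 - 2 * γ * μ * (1 - γ * supL) := by
    nlinarith [sq_nonneg (2 * γ * supL - 1),
      mul_le_mul_of_nonneg_right hμsupL (mul_pos hγ0 hγsL).le, mul_pos hγ0 hγsL]
  -- key one-step bound
  have key : ∀ x : (EuclideanSpace ℝ (Fin d)),
      ∑ i, p i * ‖x - γ • gradient (f i) x - xstar‖ ^ 2 ≤
        (1 - 2 * γ * μ * (1 - γ * supL)) * ‖x - xstar‖ ^ 2 + 2 * γ ^ 2 * σ2 := by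
    intro x
    have hsc' : μ * ‖x - xstar‖ ^ 2 ≤ ⟪x - xstar, gradient F x⟫ := by
      have h := hsc x xstar; rwa [hgradF0, sub_zero] at h
    have hinnerF : ∑ i, p i * ⟪x - xstar, gradient (f i) x⟫ = ⟪x - xstar, gradient F x⟫ := by
      rw [hFg x, inner_sum]
      exact Finset.sum_congr rfl fun i _ => (real_inner_smul_right _ _ _).symm
    have hinner_star : ∑ i, p i * ⟪x - xstar, gradient (f i) xstar⟫ = 0 := by
      have h : ∑ i, p i * ⟪x - xstar, gradient (f i) xstar⟫
          = ⟪x - xstar, ∑ i, p i • gradient (f i) xstar⟫ := by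
        rw [inner_sum]
        exact Finset.sum_congr rfl fun i _ => (real_inner_smul_right _ _ _).symm
      rw [h, hF0, inner_zero_right]
    have hexp : ∀ i, ‖x - γ • gradient (f i) x - xstar‖ ^ 2
        = ‖x - xstar‖ ^ 2 - 2 * γ * ⟪x - xstar, gradient (f i) x⟫
          + γ ^ 2 * ‖gradient (f i) x‖ ^ 2 := by
      intro i
      have hv : x - γ • gradient (f i) x - xstar = (x - xstar) - γ • gradient (f i) x := by
        abel
      rw [hv, norm_sub_sq_real, real_inner_smul_right, norm_smul, Real.norm_eq_abs, mul_pow,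
        sq_abs]
      ring
    have hsplit : ∑ i, p i * ‖x - γ • gradient (f i) x - xstar‖ ^ 2
        = ‖x - xstar‖ ^ 2 - 2 * γ * ⟪x - xstar, gradient F x⟫
          + γ ^ 2 * ∑ i, p i * ‖gradient (f i) x‖ ^ 2 := by
      calc ∑ i, p i * ‖x - γ • gradient (f i) x - xstar‖ ^ 2
          = ∑ i, (p i * ‖x - xstar‖ ^ 2 - 2 * γ * (p i * ⟪x - xstar, gradient (f i) x⟫)
              + γ ^ 2 * (p i * ‖gradient (f i) x‖ ^ 2)) := by
            apply Finset.sum_congr rfl; intro i _; rw [hexp i]; ring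
        _ = _ := by
            rw [Finset.sum_add_distrib, Finset.sum_sub_distrib, ← Finset.sum_mul, hps, one_mul,
              ← Finset.mul_sum, ← Finset.mul_sum, hinnerF]
    have hS : ∑ i, p i * ‖gradient (f i) x‖ ^ 2 ≤
        2 * supL * ⟪x - xstar, gradient F x⟫ + 2 * σ2 := by
      have h1 : ∀ i, ‖gradient (f i) x‖ ^ 2 ≤
          2 * ‖gradient (f i) x - gradient (f i) xstar‖ ^ 2
            + 2 * ‖gradient (f i) xstar‖ ^ 2 := by
        intro i
        have h := norm_add_le (gradient (f i) x - gradient (f i) xstar) (gradient (f i) xstar)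
        rw [sub_add_cancel] at h
        nlinarith [h, sq_nonneg (‖gradient (f i) x - gradient (f i) xstar‖ - ‖gradient (f i) xstar‖),
          norm_nonneg (gradient (f i) x - gradient (f i) xstar),
          norm_nonneg (gradient (f i) xstar), norm_nonneg (gradient (f i) x),
          mul_self_nonneg (‖gradient (f i) x - gradient (f i) xstar‖ + ‖gradient (f i) xstar‖)]
      calc ∑ i, p i * ‖gradient (f i) x‖ ^ 2
          ≤ ∑ i, p i * (2 * (supL * ⟪x - xstar, gradient (f i) x - gradient (f i) xstar⟫)
              + 2 * ‖gradient (f i) xstar‖ ^ 2) := by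
            apply Finset.sum_le_sum; intro i _
            apply mul_le_mul_of_nonneg_left _ (hp i)
            have h2 := hco i x
            linarith [h1 i]
        _ = 2 * supL * (∑ i, p i * ⟪x - xstar, gradient (f i) x - gradient (f i) xstar⟫)
            + 2 * σ2 := by
            rw [hσ2, Finset.mul_sum, Finset.mul_sum, ← Finset.sum_add_distrib]
            apply Finset.sum_congr rfl; intro i _; ring
        _ = 2 * supL * ⟪x - xstar, gradient F x⟫ + 2 * σ2 := by
            have h3 : ∀ i ∈ Finset.univ,
                p i * ⟪x - xstar, gradient (f i) x - gradient (f i) xstar⟫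
                  = p i * ⟪x - xstar, gradient (f i) x⟫
                    - p i * ⟪x - xstar, gradient (f i) xstar⟫ := by
              intro i _; rw [inner_sub_right]; ring
            rw [Finset.sum_congr rfl h3, Finset.sum_sub_distrib, hinnerF, hinner_star, sub_zero]
    rw [hsplit]
    nlinarith [hsc', mul_pos hγ0 hγsL,
      mul_le_mul_of_nonneg_left hS (sq_nonneg γ),
      mul_nonneg (mul_pos hγ0 hγsL).le (sub_nonneg.mpr hsc')]
  -- final induction
  intro k
  induction k with
  | zero =>
    have h0 : ∑ s : Fin 0 → Fin n, (∏ j, p (s j)) * ‖traj 0 s - xstar‖ ^ 2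
        = ‖x0 - xstar‖ ^ 2 := by
      simp [htraj0]
    rw [h0, pow_zero, one_mul]
    linarith [hRnn]
  | succ k ih =>
    have hprodnn : ∀ t : Fin k → Fin n, 0 ≤ ∏ j, p (t j) :=
      fun t => Finset.prod_nonneg fun j _ => hp _
    have hstep : ∑ s : Fin (k+1) → Fin n, (∏ j, p (s j)) * ‖traj (k+1) s - xstar‖ ^ 2
        = ∑ t : Fin k → Fin n, (∏ j, p (t j)) *
            ∑ x : Fin n, p x * ‖traj k t - γ • gradient (f x) (traj k t) - xstar‖ ^ 2 := by
      rw [← Equiv.sum_comp (Fin.snocEquiv (fun _ : Fin (k + 1) => Fin n))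
        (fun s => (∏ j, p (s j)) * ‖traj (k+1) s - xstar‖ ^ 2), Fintype.sum_prod_type,
        Finset.sum_comm]
      apply Finset.sum_congr rfl; intro t _
      rw [Finset.mul_sum]
      apply Finset.sum_congr rfl; intro x _
      have hsnoc : (Fin.snocEquiv (fun _ : Fin (k+1) => Fin n) (x, t)) = Fin.snoc t x := rfl
      have hcast : (Fin.snoc t x : Fin (k+1) → Fin n) ∘ Fin.castSucc = t := by
        funext j; simp
      have hlast : (Fin.snoc t x : Fin (k+1) → Fin n) (Fin.last k) = x := Fin.snoc_last _ _
      rw [hsnoc, htrajS k (Fin.snoc t x), hcast, hlast, Fin.prod_univ_castSucc]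
      simp only [Fin.snoc_castSucc, Fin.snoc_last]
      ring
    calc ∑ s : Fin (k+1) → Fin n, (∏ j, p (s j)) * ‖traj (k+1) s - xstar‖ ^ 2
        = ∑ t : Fin k → Fin n, (∏ j, p (t j)) *
            ∑ x : Fin n, p x * ‖traj k t - γ • gradient (f x) (traj k t) - xstar‖ ^ 2 := hstep
      _ ≤ ∑ t : Fin k → Fin n, (∏ j, p (t j)) *
            ((1 - 2 * γ * μ * (1 - γ * supL)) * ‖traj k t - xstar‖ ^ 2 + 2 * γ ^ 2 * σ2) :=
          Finset.sum_le_sum fun t _ =>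
            mul_le_mul_of_nonneg_left (key (traj k t)) (hprodnn t)
      _ = (1 - 2 * γ * μ * (1 - γ * supL)) *
            (∑ t : Fin k → Fin n, (∏ j, p (t j)) * ‖traj k t - xstar‖ ^ 2)
            + 2 * γ ^ 2 * σ2 := by
          simp only [mul_add]
          rw [Finset.sum_add_distrib]
          congr 1
          · rw [Finset.mul_sum]
            apply Finset.sum_congr rfl; intro t _; ring
          · rw [← Finset.sum_mul, hsum1 k, one_mul]
      _ ≤ (1 - 2 * γ * μ * (1 - γ * supL)) *
            ((1 - 2 * γ * μ * (1 - γ * supL)) ^ k * ‖x0 - xstar‖ ^ 2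
              + γ * σ2 / (μ * (1 - γ * supL)))
            + 2 * γ ^ 2 * σ2 :=
          add_le_add_left (mul_le_mul_of_nonneg_left ih hc0) _
      _ = (1 - 2 * γ * μ * (1 - γ * supL)) ^ (k+1) * ‖x0 - xstar‖ ^ 2
            + γ * σ2 / (μ * (1 - γ * supL)) := by
          have hne : μ * (1 - γ * supL) ≠ 0 := ne_of_gt (mul_pos hμ hγsL)
          field_simp
          ring
end

section
/- The randomized Kaczmarz update x_{k+1} = x_k + c·(b_i - ⟨a_i, x_k⟩)/‖a_i‖²·a_i, with row i selected with probability ‖a_i‖²/‖A‖_F², coincides with the weighted SGD update x_{k+1} = x_k - (γ/w(i))∇f_i(x_k) applied to f_i(x) = (n/2)(⟨a_i,x⟩ - b_i)², with weights w(i) = L_i/L̄ = n‖a_i‖²/‖A‖_F² and step size γ = c/‖A‖_F². -/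
open scoped RealInnerProductSpace BigOperators

lemma grad_aux {d : ℕ} (v : EuclideanSpace ℝ (Fin d)) (b C : ℝ)
    (x : EuclideanSpace ℝ (Fin d)) :
    HasGradientAt (fun y => (C / 2) * (⟪v, y⟫ - b) ^ 2)
      ((C * (⟪v, x⟫ - b)) • v) x := by
  rw [hasGradientAt_iff_hasFDerivAt]
  have h1 : HasFDerivAt (fun y : EuclideanSpace ℝ (Fin d) => ⟪v, y⟫)
      (innerSL ℝ v) x := (innerSL ℝ v).hasFDerivAt
  have h2 : HasDerivAt (fun t : ℝ => (C / 2) * (t - b) ^ 2)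
      (C * (⟪v, x⟫ - b)) (⟪v, x⟫) := by
    have h := (((hasDerivAt_id (⟪v, x⟫)).sub_const b).pow 2).const_mul (C / 2)
    refine h.congr_deriv ?_
    simp
    ring
  have h3 := h2.comp_hasFDerivAt x h1
  refine h3.congr_fderiv ?_
  ext y
  simp [InnerProductSpace.toDual_apply_apply, real_inner_smul_left]

/-- The randomized Kaczmarz update with row `i` chosen with probability
`‖a_i‖²/‖A‖_F²` coincides with the weighted SGD update
`x ↦ x - (γ/w(i)) ∇f_i(x)` for `f_i(x) = (n/2)(⟨a_i,x⟩-b_i)²`, with weights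
`w(i) = L_i/L̄ = n‖a_i‖²/‖A‖_F²` and step size `γ = c/‖A‖_F²`; moreover the
Kaczmarz sampling probabilities are exactly the `w`-reweighting `w(i)·(1/n)` of
the uniform source distribution. -/
theorem stmt14 {d n : ℕ} (hn : 0 < n)
    (a : Fin n → EuclideanSpace ℝ (Fin d)) (b : Fin n → ℝ)
    (ha : ∀ i, a i ≠ 0) (c : ℝ) (hc : 0 < c)
    (f : Fin n → EuclideanSpace ℝ (Fin d) → ℝ)
    (hf : ∀ i x, f i x = ((n : ℝ) / 2) * (⟪a i, x⟫ - b i) ^ 2)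
    (AF2 : ℝ) (hAF2 : AF2 = ∑ j, ‖a j‖ ^ 2)
    (w : Fin n → ℝ) (hw : ∀ i, w i = (n : ℝ) * ‖a i‖ ^ 2 / AF2)
    (γ : ℝ) (hγ : γ = c / AF2) :
    (∀ (i : Fin n) (x : EuclideanSpace ℝ (Fin d)),
      x + c • (((b i - ⟪a i, x⟫) / ‖a i‖ ^ 2) • a i) =
        x - (γ / w i) • gradient (f i) x) ∧
    (∀ i, ‖a i‖ ^ 2 / AF2 = w i * (1 / (n : ℝ))) := by
  have hn' : (n : ℝ) ≠ 0 := Nat.cast_ne_zero.mpr hn.ne'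
  have hAF2pos : 0 < AF2 := by
    rw [hAF2]
    classical
    obtain ⟨i⟩ := Fin.pos_iff_nonempty.mp hn
    have hi : 0 < ‖a i‖ ^ 2 := pow_pos (norm_pos_iff.mpr (ha i)) 2
    exact Finset.sum_pos' (fun j _ => by positivity) ⟨i, Finset.mem_univ i, hi⟩
  constructor
  · intro i x
    have hai : ‖a i‖ ≠ 0 := norm_ne_zero_iff.mpr (ha i)
    have hgrad : gradient (f i) x = ((n : ℝ) * (⟪a i, x⟫ - b i)) • a i := by
      have h := grad_aux (a i) (b i) (n : ℝ) x
      have hfi : f i = fun y => ((n : ℝ) / 2) * (⟪a i, y⟫ - b i) ^ 2 :=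
        funext (hf i)
      rw [hfi]
      exact h.gradient
    have key : γ / w i * ((n : ℝ) * (⟪a i, x⟫ - b i)) =
        -(c * ((b i - ⟪a i, x⟫) / ‖a i‖ ^ 2)) := by
      rw [hw i, hγ]
      field_simp
      ring
    rw [hgrad, smul_smul, smul_smul, key, neg_smul, sub_neg_eq_add]
  · intro i
    rw [hw i]
    field_simp
end

section
/- For the randomized Kaczmarz method with step size 0 < c < 1 and rows selected with probability p_i = ‖a_i‖²/‖A‖_F², the iterates satisfy E‖x_k - x⋆‖² ≤ (1 - 2c(1-c)/K(A))^k ‖x_0 - x⋆‖² + (c/(1-c))·K(A)·r, where K(A) = ‖A‖_F²‖(AᵀA)^{-1}‖₂, r = σ²/(n‖A‖_F²·min_i‖a_i‖²), and σ² = n·Σ_i ‖a_i‖²(⟨a_i,x⋆⟩ - b_i)². -/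
open scoped RealInnerProductSpace BigOperators

set_option maxHeartbeats 4000000 in
/-- Corollary 5.1: randomized Kaczmarz with step size `0 < c < 1` and rows chosen
with probability `p_i = ‖a_i‖²/‖A‖_F²` converges linearly, up to a horizon:
`E‖x_k - x⋆‖² ≤ (1 - 2c(1-c)/K(A))^k ‖x_0-x⋆‖² + (c/(1-c)) K(A) r`, where
`K(A) = ‖A‖_F² ‖(AᵀA)⁻¹‖₂` and `r = σ²/(n ‖A‖_F² min_i ‖a_i‖²)`.  The inverse
`(AᵀA)⁻¹` is represented by the map `S` inverting `T : x ↦ ∑ ⟨a_i,x⟩ a_i`, and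
the expectation is an explicit sum over index sequences. -/
theorem stmt15 {d n : ℕ} (hn : 0 < n)
    (a : Fin n → EuclideanSpace ℝ (Fin d)) (b : Fin n → ℝ)
    (ha : ∀ i, a i ≠ 0) (c : ℝ) (hc0 : 0 < c) (hc1 : c < 1)
    (AF2 : ℝ) (hAF2 : AF2 = ∑ j, ‖a j‖ ^ 2)
    (p : Fin n → ℝ) (hp : ∀ i, p i = ‖a i‖ ^ 2 / AF2)
    (T S : EuclideanSpace ℝ (Fin d) →L[ℝ] EuclideanSpace ℝ (Fin d))
    (hT : ∀ x, T x = ∑ i, ⟪a i, x⟫ • a i)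
    (hTS : T.comp S = ContinuousLinearMap.id ℝ _)
    (hST : S.comp T = ContinuousLinearMap.id ℝ _)
    (K : ℝ) (hK : K = AF2 * ‖S‖)
    (F : EuclideanSpace ℝ (Fin d) → ℝ)
    (hF : ∀ x, F x = (1 / 2) * ∑ i, (⟪a i, x⟫ - b i) ^ 2)
    (xstar : EuclideanSpace ℝ (Fin d)) (hmin : ∀ x, F xstar ≤ F x)
    (σ2 : ℝ) (hσ2 : σ2 = (n : ℝ) * ∑ i, ‖a i‖ ^ 2 * (⟪a i, xstar⟫ - b i) ^ 2)
    (r : ℝ) (hr : r = σ2 / ((n : ℝ) * AF2 * ⨅ i, ‖a i‖ ^ 2))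
    (x0 : EuclideanSpace ℝ (Fin d))
    (traj : ∀ k : ℕ, (Fin k → Fin n) → EuclideanSpace ℝ (Fin d))
    (htraj0 : ∀ s, traj 0 s = x0)
    (htrajS : ∀ k (s : Fin (k + 1) → Fin n),
      traj (k + 1) s = traj k (s ∘ Fin.castSucc) +
        c • (((b (s (Fin.last k)) - ⟪a (s (Fin.last k)), traj k (s ∘ Fin.castSucc)⟫) /
          ‖a (s (Fin.last k))‖ ^ 2) • a (s (Fin.last k)))) :
    ∀ k : ℕ,
      ∑ s : Fin k → Fin n, (∏ j, p (s j)) * ‖traj k s - xstar‖ ^ 2 ≤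
        (1 - 2 * c * (1 - c) / K) ^ k * ‖x0 - xstar‖ ^ 2 + (c / (1 - c)) * K * r := by
  have i0 : Fin n := ⟨0, hn⟩
  haveI : Nonempty (Fin n) := ⟨i0⟩
  have hai2 : ∀ i, (0:ℝ) < ‖a i‖ ^ 2 := fun i => by
    have := norm_pos_iff.mpr (ha i); positivity
  have hAF2pos : 0 < AF2 := by
    rw [hAF2]; exact Finset.sum_pos (fun i _ => hai2 i) Finset.univ_nonempty
  have hpsum : ∑ i, p i = 1 := by
    simp only [hp]; rw [← Finset.sum_div, ← hAF2, div_self hAF2pos.ne']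
  have hppos : ∀ i, 0 ≤ p i := fun i => by rw [hp]; positivity
  -- S positive norm
  have hSpos : 0 < ‖S‖ := by
    rw [norm_pos_iff]
    intro h
    apply ha i0
    have := congrArg (fun L => L (a i0)) hTS
    simp only [ContinuousLinearMap.comp_apply, ContinuousLinearMap.id_apply, h,
      ContinuousLinearMap.zero_apply, map_zero] at this
    exact this.symm
  have hKpos : 0 < K := by rw [hK]; positivity
  -- w and the optimality condition
  set w : Fin n → ℝ := fun i => ⟪a i, xstar⟫ - b i with hw
  have hopt : ∀ u : EuclideanSpace ℝ (Fin d), ∑ i, w i * ⟪a i, u⟫ = 0 := by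
    intro u
    set g := ∑ i, w i * ⟪a i, u⟫ with hg
    set h := ∑ i, ⟪a i, u⟫ ^ 2 with hh
    have hh0 : 0 ≤ h := Finset.sum_nonneg fun i _ => sq_nonneg _
    have hquad : ∀ t : ℝ, 0 ≤ t * g + t ^ 2 / 2 * h := by
      intro t
      have hexp : ∀ i : Fin n, (⟪a i, xstar + t • u⟫ - b i) ^ 2
          = (⟪a i, xstar⟫ - b i) ^ 2 + 2 * t * (w i * ⟪a i, u⟫) + t ^ 2 * ⟪a i, u⟫ ^ 2 := by
        intro i
        rw [inner_add_right, real_inner_smul_right, hw]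
        ring
      have hmin' := hmin (xstar + t • u)
      rw [hF, hF] at hmin'
      rw [Finset.sum_congr rfl fun i _ => hexp i] at hmin'
      rw [Finset.sum_add_distrib, Finset.sum_add_distrib, ← Finset.mul_sum, ← Finset.mul_sum,
        ← hg, ← hh] at hmin'
      nlinarith [hmin']
    by_contra hgne
    have h1p : (0:ℝ) < h + 1 := by linarith
    have key := hquad (-g / (h + 1))
    have hg2 : 0 < g ^ 2 := by positivity
    rw [div_mul_eq_mul_div, div_pow, neg_pow, div_div, div_mul_eq_mul_div,
      div_add_div _ _ (by positivity) (by positivity), le_div_iff₀ (by positivity)] at key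
    nlinarith [sq_nonneg (h + 1)]
  -- quadratic form bounds
  have hQnn : ∀ u : EuclideanSpace ℝ (Fin d), (0:ℝ) ≤ ∑ i, ⟪a i, u⟫ ^ 2 :=
    fun u => Finset.sum_nonneg fun i _ => sq_nonneg _
  have hTinner : ∀ v u : EuclideanSpace ℝ (Fin d), ⟪T v, u⟫ = ∑ i, ⟪a i, v⟫ * ⟪a i, u⟫ := by
    intro v u
    rw [hT, sum_inner]
    exact Finset.sum_congr rfl fun i _ => real_inner_smul_left _ _ _
  have hTSu : ∀ u : EuclideanSpace ℝ (Fin d), T (S u) = u := by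
    intro u
    have := congrArg (fun L => L u) hTS
    simpa using this
  have hkey : ∀ u : EuclideanSpace ℝ (Fin d), ‖u‖ ^ 2 ≤ ‖S‖ * ∑ i, ⟪a i, u⟫ ^ 2 := by
    intro u
    rcases eq_or_ne u 0 with hu | hu
    · subst hu
      simp only [inner_zero_right, norm_zero]
      have hz : ∑ _i : Fin n, (0:ℝ) ^ 2 = 0 := by simp
      rw [hz, mul_zero]
      norm_num
    · have h1 : ⟪u, u⟫ = ∑ i, ⟪a i, S u⟫ * ⟪a i, u⟫ :=
        calc ⟪u, u⟫ = ⟪T (S u), u⟫ := by rw [hTSu u]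
        _ = ∑ i, ⟪a i, S u⟫ * ⟪a i, u⟫ := hTinner (S u) u
      have hcs : (∑ i, ⟪a i, S u⟫ * ⟪a i, u⟫) ^ 2
          ≤ (∑ i, ⟪a i, S u⟫ ^ 2) * ∑ i, ⟪a i, u⟫ ^ 2 :=
        Finset.sum_mul_sq_le_sq_mul_sq _ _ _
      have h2 : ∑ i, ⟪a i, S u⟫ ^ 2 = ⟪u, S u⟫ :=
        calc ∑ i, ⟪a i, S u⟫ ^ 2 = ∑ i, ⟪a i, S u⟫ * ⟪a i, S u⟫ :=
              Finset.sum_congr rfl fun i _ => by ring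
        _ = ⟪T (S u), S u⟫ := (hTinner (S u) (S u)).symm
        _ = ⟪u, S u⟫ := by rw [hTSu u]
      have h3 : ⟪u, S u⟫ ≤ ‖S‖ * ‖u‖ ^ 2 :=
        calc ⟪u, S u⟫ ≤ ‖u‖ * ‖S u‖ := real_inner_le_norm u (S u)
        _ ≤ ‖u‖ * (‖S‖ * ‖u‖) := by
            have := S.le_opNorm u
            have h0 : (0:ℝ) ≤ ‖u‖ := norm_nonneg _
            nlinarith
        _ = ‖S‖ * ‖u‖ ^ 2 := by ring
      have hnormsq : ⟪u, u⟫ = ‖u‖ ^ 2 := real_inner_self_eq_norm_sq u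
      have h4 : (‖u‖ ^ 2) ^ 2 ≤ ‖S‖ * ‖u‖ ^ 2 * ∑ i, ⟪a i, u⟫ ^ 2 := by
        calc (‖u‖ ^ 2) ^ 2 = (∑ i, ⟪a i, S u⟫ * ⟪a i, u⟫) ^ 2 := by rw [← hnormsq, h1]
        _ ≤ (∑ i, ⟪a i, S u⟫ ^ 2) * ∑ i, ⟪a i, u⟫ ^ 2 := hcs
        _ = ⟪u, S u⟫ * ∑ i, ⟪a i, u⟫ ^ 2 := by rw [h2]
        _ ≤ ‖S‖ * ‖u‖ ^ 2 * ∑ i, ⟪a i, u⟫ ^ 2 := mul_le_mul_of_nonneg_right h3 (hQnn u)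
      have hu2 : 0 < ‖u‖ ^ 2 := by have := norm_pos_iff.mpr hu; positivity
      nlinarith [h4, hu2]
  -- K ≥ 1
  have hK1 : 1 ≤ K := by
    have h1 := hkey (a i0)
    have h2 : (∑ i, ⟪a i, a i0⟫ ^ 2) ≤ AF2 * ‖a i0‖ ^ 2 := by
      rw [hAF2, Finset.sum_mul]
      refine Finset.sum_le_sum fun i _ => ?_
      have hcs := abs_real_inner_le_norm (a i) (a i0)
      nlinarith [abs_nonneg (⟪a i, a i0⟫ : ℝ), sq_abs (⟪a i, a i0⟫ : ℝ),
        norm_nonneg (a i), norm_nonneg (a i0)]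
    rw [hK]
    nlinarith [hai2 i0, hQnn (a i0)]
  -- q and noise
  set q : ℝ := 1 - 2 * c * (1 - c) / K with hqdef
  have hq0 : 0 ≤ q := by
    have h1 : 2 * c * (1 - c) / K ≤ 2 * c * (1 - c) :=
      div_le_self (by nlinarith) hK1
    have h2 : 2 * c * (1 - c) ≤ 1 / 2 := by nlinarith [sq_nonneg (2 * c - 1)]
    simp only [hqdef]; linarith
  set W : ℝ := ∑ i, w i ^ 2 with hW
  have hWnn : 0 ≤ W := Finset.sum_nonneg fun i _ => sq_nonneg _
  -- r ≥ W / AF2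
  have hrW : W / AF2 ≤ r := by
    obtain ⟨j, -, hj⟩ := Finset.exists_min_image Finset.univ (fun i => ‖a i‖ ^ 2)
      ⟨i0, Finset.mem_univ i0⟩
    have hm : (⨅ i, ‖a i‖ ^ 2) = ‖a j‖ ^ 2 :=
      le_antisymm (ciInf_le (Set.Finite.bddBelow (Set.finite_range _)) j)
        (le_ciInf fun i => hj i (Finset.mem_univ i))
    have hσ2ge : (n : ℝ) * (‖a j‖ ^ 2) * W ≤ σ2 := by
      rw [hσ2, hW]
      have : ∑ i, ‖a j‖ ^ 2 * w i ^ 2 ≤ ∑ i, ‖a i‖ ^ 2 * (⟪a i, xstar⟫ - b i) ^ 2 :=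
        Finset.sum_le_sum fun i _ => by
          have := hj i (Finset.mem_univ i)
          simp only [hw]
          nlinarith [sq_nonneg (⟪a i, xstar⟫ - b i)]
      rw [← Finset.mul_sum] at this
      have hn' : (0:ℝ) < n := Nat.cast_pos.mpr hn
      nlinarith
    have hnpos : (0:ℝ) < n := Nat.cast_pos.mpr hn
    have hjpos := hai2 j
    rw [hr, hm, div_le_div_iff₀ hAF2pos (by positivity)]
    nlinarith
  have hrnn : 0 ≤ r := le_trans (by positivity) hrW
  have hCnn : 0 ≤ c / (1 - c) * K * r := by
    have : 0 < 1 - c := by linarith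
    positivity
  -- one-step bound
  set N : ℝ := c ^ 2 * W / AF2 with hN
  have hstep : ∀ x : EuclideanSpace ℝ (Fin d),
      ∑ i, p i * ‖x + c • (((b i - ⟪a i, x⟫) / ‖a i‖ ^ 2) • a i) - xstar‖ ^ 2
        ≤ q * ‖x - xstar‖ ^ 2 + N := by
    intro x
    set e : EuclideanSpace ℝ (Fin d) := x - xstar with he
    have hxe : x = e + xstar := by rw [he]; abel
    have hinner : ∀ i, ⟪a i, x⟫ = ⟪a i, e⟫ + ⟪a i, xstar⟫ := by
      intro i; rw [hxe, inner_add_right]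
    set A1 : ℝ := ∑ i, ⟪a i, e⟫ ^ 2 with hA1
    have hA1nn : 0 ≤ A1 := hQnn e
    have hterm : ∀ i, p i * ‖x + c • (((b i - ⟪a i, x⟫) / ‖a i‖ ^ 2) • a i) - xstar‖ ^ 2
        = p i * ‖e‖ ^ 2 + (2 * c * ((b i - ⟪a i, x⟫) * ⟪a i, e⟫)
            + c ^ 2 * (b i - ⟪a i, x⟫) ^ 2) / AF2 := by
      intro i
      have hvec : x + c • (((b i - ⟪a i, x⟫) / ‖a i‖ ^ 2) • a i) - xstar
          = e + (c * ((b i - ⟪a i, x⟫) / ‖a i‖ ^ 2)) • a i := by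
        rw [he, smul_smul]; abel
      rw [hvec, norm_add_sq_real, real_inner_smul_right, norm_smul, mul_pow, hp i,
        real_inner_comm e (a i), Real.norm_eq_abs, sq_abs]
      have hna : (‖a i‖ : ℝ) ^ 2 ≠ 0 := (hai2 i).ne'
      set gi : ℝ := ⟪a i, e⟫ with hgi
      set gx : ℝ := ⟪a i, x⟫ with hgx
      set na : ℝ := ‖a i‖ ^ 2 with hna2
      field_simp
      ring
    rw [Finset.sum_congr rfl fun i _ => hterm i, Finset.sum_add_distrib, ← Finset.sum_mul,
      hpsum, one_mul, ← Finset.sum_div]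
    have hs1 : ∑ i, (2 * c * ((b i - ⟪a i, x⟫) * ⟪a i, e⟫) + c ^ 2 * (b i - ⟪a i, x⟫) ^ 2)
        = (c ^ 2 - 2 * c) * A1 + c ^ 2 * W
            + (2 * c ^ 2 - 2 * c) * ∑ i, w i * ⟪a i, e⟫ := by
      have hpt : ∀ i : Fin n, 2 * c * ((b i - ⟪a i, x⟫) * ⟪a i, e⟫)
          + c ^ 2 * (b i - ⟪a i, x⟫) ^ 2
          = (c ^ 2 - 2 * c) * ⟪a i, e⟫ ^ 2 + c ^ 2 * w i ^ 2
            + (2 * c ^ 2 - 2 * c) * (w i * ⟪a i, e⟫) := by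
        intro i
        rw [hinner i]
        simp only [hw]
        ring
      rw [Finset.sum_congr rfl fun i _ => hpt i, Finset.sum_add_distrib,
        Finset.sum_add_distrib, ← Finset.mul_sum, ← Finset.mul_sum, ← Finset.mul_sum,
        ← hA1, ← hW]
    rw [hs1, hopt e, mul_zero, add_zero]
    -- main inequality
    have hkeye : ‖e‖ ^ 2 ≤ ‖S‖ * A1 := by rw [hA1]; exact hkey e
    have hfrac : 2 * c * (1 - c) / K * ‖e‖ ^ 2 ≤ (2 * c - c ^ 2) * A1 / AF2 := by
      rw [hK, div_mul_eq_mul_div, div_le_div_iff₀ (mul_pos hAF2pos hSpos) hAF2pos]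
      have h1c : (0:ℝ) < 1 - c := by linarith
      have hc2 : (0:ℝ) ≤ 2 * c * (1 - c) * AF2 := by positivity
      have hmono := mul_le_mul_of_nonneg_left hkeye hc2
      nlinarith [mul_nonneg (mul_nonneg (sq_nonneg c) hAF2pos.le)
        (mul_nonneg hSpos.le hA1nn)]
    have hsplit : ((c ^ 2 - 2 * c) * A1 + c ^ 2 * W) / AF2
        = -((2 * c - c ^ 2) * A1 / AF2) + c ^ 2 * W / AF2 := by
      field_simp; ring
    rw [hsplit, hN, hqdef]
    nlinarith [hfrac]
  -- sum over snoc decomposition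
  have hsum_snoc : ∀ (k : ℕ) (f : (Fin (k+1) → Fin n) → ℝ),
      ∑ s : Fin (k+1) → Fin n, f s = ∑ s : Fin k → Fin n, ∑ i : Fin n, f (Fin.snoc s i) := by
    intro k f
    rw [← Equiv.sum_comp (show ((Fin k → Fin n) × Fin n) ≃ (Fin (k+1) → Fin n) from
        ⟨fun qq => Fin.snoc qq.1 qq.2, fun s => (fun j => s (Fin.castSucc j), s (Fin.last k)),
         fun qq => by refine Prod.ext ?_ ?_ <;> simp,
         fun s => Fin.snoc_init_self s⟩) f, Fintype.sum_prod_type]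
    simp only [Equiv.coe_fn_mk]
    rfl
  have hprodone : ∀ k : ℕ, ∑ s : Fin k → Fin n, ∏ j, p (s j) = 1 := by
    intro k
    rw [← Fintype.prod_sum (fun (_ : Fin k) (i : Fin n) => p i)]
    simp [hpsum]
  have hprodnn : ∀ (k : ℕ) (s : Fin k → Fin n), 0 ≤ ∏ j, p (s j) :=
    fun k s => Finset.prod_nonneg fun j _ => hppos _
  -- induction
  intro k
  induction k with
  | zero =>
      haveI : Subsingleton (Fin 0 → Fin n) := ⟨fun f g => funext fun j => j.elim0⟩
      have : ∑ s : Fin 0 → Fin n, (∏ j, p (s j)) * ‖traj 0 s - xstar‖ ^ 2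
          = ‖x0 - xstar‖ ^ 2 := by
        rw [Fintype.sum_subsingleton _ (fun j : Fin 0 => i0)]
        simp [htraj0]
      rw [this, pow_zero, one_mul]
      linarith [hCnn]
  | succ k ih =>
      have hE : ∑ s : Fin (k+1) → Fin n, (∏ j, p (s j)) * ‖traj (k+1) s - xstar‖ ^ 2
          = ∑ s : Fin k → Fin n, (∏ j, p (s j)) *
              ∑ i, p i * ‖traj k s + c • (((b i - ⟪a i, traj k s⟫) / ‖a i‖ ^ 2) • a i)
                - xstar‖ ^ 2 := by
        rw [hsum_snoc k (fun s => (∏ j, p (s j)) * ‖traj (k+1) s - xstar‖ ^ 2)]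
        refine Finset.sum_congr rfl fun s _ => ?_
        rw [Finset.mul_sum]
        refine Finset.sum_congr rfl fun i _ => ?_
        have hprod : (∏ j, p ((Fin.snoc s i : Fin (k+1) → Fin n) j))
            = (∏ j, p (s j)) * p i :=
          calc (∏ j, p ((Fin.snoc s i : Fin (k+1) → Fin n) j))
              = ∏ j, (p ∘ Fin.snoc s i) j := rfl
          _ = ∏ j, Fin.snoc (p ∘ s) (p i) j := by rw [Fin.comp_snoc]
          _ = (∏ j, p (s j)) * p i := Fin.prod_snoc _ _
        have htr : traj (k+1) (Fin.snoc s i)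
            = traj k s + c • (((b i - ⟪a i, traj k s⟫) / ‖a i‖ ^ 2) • a i) := by
          have := htrajS k (Fin.snoc s i)
          rwa [Fin.snoc_comp_castSucc, Fin.snoc_last] at this
        rw [hprod, htr]
        ring
      rw [hE]
      have hstep' : ∑ s : Fin k → Fin n, (∏ j, p (s j)) *
            ∑ i, p i * ‖traj k s + c • (((b i - ⟪a i, traj k s⟫) / ‖a i‖ ^ 2) • a i)
              - xstar‖ ^ 2
          ≤ ∑ s : Fin k → Fin n, (∏ j, p (s j)) * (q * ‖traj k s - xstar‖ ^ 2 + N) :=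
        Finset.sum_le_sum fun s _ =>
          mul_le_mul_of_nonneg_left (hstep (traj k s)) (hprodnn k s)
      have hsplit2 : ∑ s : Fin k → Fin n, (∏ j, p (s j)) * (q * ‖traj k s - xstar‖ ^ 2 + N)
          = q * (∑ s : Fin k → Fin n, (∏ j, p (s j)) * ‖traj k s - xstar‖ ^ 2) + N := by
        have h1 : ∀ s : Fin k → Fin n,
            (∏ j, p (s j)) * (q * ‖traj k s - xstar‖ ^ 2 + N)
              = q * ((∏ j, p (s j)) * ‖traj k s - xstar‖ ^ 2) + N * ∏ j, p (s j) :=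
          fun s => by ring
        rw [Finset.sum_congr rfl fun s _ => h1 s, Finset.sum_add_distrib, ← Finset.mul_sum,
          ← Finset.mul_sum, hprodone k, mul_one]
      -- combine
      have hNle : N ≤ 2 * c ^ 2 * r := by
        rw [hN]
        have h1 : c ^ 2 * W / AF2 = c ^ 2 * (W / AF2) := by ring
        rw [h1]
        nlinarith [hrW, sq_nonneg c, hrnn]
      have hgeom : (1 - q) * (c / (1 - c) * K * r) = 2 * c ^ 2 * r := by
        rw [hqdef]
        have h1c : (1:ℝ) - c ≠ 0 := by linarith
        field_simp
        ring
      have hqC : q * (c / (1 - c) * K * r) + N ≤ c / (1 - c) * K * r := by nlinarith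
      have hmul := mul_le_mul_of_nonneg_left ih hq0
      calc ∑ s : Fin k → Fin n, (∏ j, p (s j)) *
            ∑ i, p i * ‖traj k s + c • (((b i - ⟪a i, traj k s⟫) / ‖a i‖ ^ 2) • a i)
              - xstar‖ ^ 2
          ≤ q * (∑ s : Fin k → Fin n, (∏ j, p (s j)) * ‖traj k s - xstar‖ ^ 2) + N := by
            rw [← hsplit2]; exact hstep'
        _ ≤ q * ((1 - 2 * c * (1 - c) / K) ^ k * ‖x0 - xstar‖ ^ 2
              + c / (1 - c) * K * r) + N := by linarith
        _ ≤ (1 - 2 * c * (1 - c) / K) ^ (k+1) * ‖x0 - xstar‖ ^ 2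
              + c / (1 - c) * K * r := by
            have hpow : q * ((1 - 2 * c * (1 - c) / K) ^ k * ‖x0 - xstar‖ ^ 2)
                = (1 - 2 * c * (1 - c) / K) ^ (k+1) * ‖x0 - xstar‖ ^ 2 := by
              rw [hqdef, pow_succ]; ring
            linarith [hpow, hqC]
end

section
/- Randomized Kaczmarz with uniform row selection, x_{k+1} = x_k + c(b_i - ⟨a_i,x_k⟩)/‖a_i‖²·a_i with i uniform on {1,…,n} and 0 < c < 1, satisfies E‖x_k - x⋆^w‖² ≤ (1 - 2c(1-c)/K(D⁻¹A))^k‖x_0 - x⋆^w‖² + (c/(1-c))K(D⁻¹A)·‖e_w‖²/n, where x⋆^w minimizes (1/2)‖D⁻¹(Ax - b)‖², D = diag(‖a_i‖), e_w = D⁻¹(Ax⋆^w - b), and K(M) = ‖M‖_F²‖(MᵀM)^{-1}‖₂. In particular, uniform-sampling Kaczmarz converges (up to a horizon) to the weighted least squares solution. -/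
open scoped RealInnerProductSpace BigOperators

set_option maxHeartbeats 2000000 in
/-- Corollary 5.2: randomized Kaczmarz with *uniform* row selection and step size
`0 < c < 1` converges linearly (up to a horizon) to the *weighted* least-squares
solution `x⋆^w = argmin (1/2)‖D⁻¹(Ax-b)‖²`, where `D = diag(‖a_i‖)`.  The rows of
`D⁻¹A` are the unit vectors `u_i = a_i/‖a_i‖`, `K(D⁻¹A) = ‖D⁻¹A‖_F² ‖((D⁻¹A)ᵀD⁻¹A)⁻¹‖₂`
is represented via the map `Sw` inverting `Tw : x ↦ ∑ ⟨u_i,x⟩ u_i`, and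
`r_w = ‖e_w‖²/n` with `e_w = D⁻¹(A x⋆^w - b)`. -/
theorem stmt16 {d n : ℕ} (hn : 0 < n)
    (a : Fin n → EuclideanSpace ℝ (Fin d)) (b : Fin n → ℝ)
    (ha : ∀ i, a i ≠ 0) (c : ℝ) (hc0 : 0 < c) (hc1 : c < 1)
    (u : Fin n → EuclideanSpace ℝ (Fin d)) (hu : ∀ i, u i = ‖a i‖⁻¹ • a i)
    (Tw Sw : EuclideanSpace ℝ (Fin d) →L[ℝ] EuclideanSpace ℝ (Fin d))
    (hTw : ∀ x, Tw x = ∑ i, ⟪u i, x⟫ • u i)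
    (hTS : Tw.comp Sw = ContinuousLinearMap.id ℝ _)
    (hST : Sw.comp Tw = ContinuousLinearMap.id ℝ _)
    (K : ℝ) (hK : K = (∑ i, ‖u i‖ ^ 2) * ‖Sw‖)
    (Fw : EuclideanSpace ℝ (Fin d) → ℝ)
    (hFw : ∀ x, Fw x = (1 / 2) * ∑ i, ((⟪a i, x⟫ - b i) / ‖a i‖) ^ 2)
    (xstarw : EuclideanSpace ℝ (Fin d)) (hmin : ∀ x, Fw xstarw ≤ Fw x)
    (rw : ℝ) (hrw : rw = (∑ i, ((⟪a i, xstarw⟫ - b i) / ‖a i‖) ^ 2) / (n : ℝ))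
    (x0 : EuclideanSpace ℝ (Fin d))
    (traj : ∀ k : ℕ, (Fin k → Fin n) → EuclideanSpace ℝ (Fin d))
    (htraj0 : ∀ s, traj 0 s = x0)
    (htrajS : ∀ k (s : Fin (k + 1) → Fin n),
      traj (k + 1) s = traj k (s ∘ Fin.castSucc) +
        c • (((b (s (Fin.last k)) - ⟪a (s (Fin.last k)), traj k (s ∘ Fin.castSucc)⟫) /
          ‖a (s (Fin.last k))‖ ^ 2) • a (s (Fin.last k)))) :
    ∀ k : ℕ,
      ∑ s : Fin k → Fin n, (∏ _j : Fin k, (1 / (n : ℝ))) * ‖traj k s - xstarw‖ ^ 2 ≤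
        (1 - 2 * c * (1 - c) / K) ^ k * ‖x0 - xstarw‖ ^ 2 + (c / (1 - c)) * K * rw := by
  have hn' : (0:ℝ) < n := by exact_mod_cast hn
  have h1c : (0:ℝ) < 1 - c := by linarith
  have hun : ∀ i, ‖u i‖ = 1 := by
    intro i
    rw [hu, norm_smul, norm_inv, norm_norm,
      inv_mul_cancel₀ (norm_ne_zero_iff.2 (ha i))]
  have hsum : (∑ i, ‖u i‖ ^ 2) = (n:ℝ) := by simp [hun]
  have hKn : K = (n:ℝ) * ‖Sw‖ := by rw [hK, hsum]
  have hd : 0 < d := by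
    rcases Nat.eq_zero_or_pos d with h0 | h; swap; · exact h
    subst h0
    have : ∀ x y : EuclideanSpace ℝ (Fin 0), x = y := fun x y =>
      by ext i; exact i.elim0
    exact absurd (this (a ⟨0, hn⟩) 0) (ha ⟨0, hn⟩)
  -- (C) key spectral lower bound
  have hC : ∀ y : EuclideanSpace ℝ (Fin d),
      ‖y‖ ^ 2 ≤ ‖Sw‖ * ∑ i, ⟪u i, y⟫ ^ 2 := by
    intro y
    set z := Sw y with hz
    have hTz : Tw z = y := by
      have := congrArg (fun T : EuclideanSpace ℝ (Fin d) →L[ℝ] EuclideanSpace ℝ (Fin d) => T y) hTS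
      simpa using this
    have h1 : ∑ i, ⟪u i, z⟫ * ⟪u i, y⟫ = ‖y‖ ^ 2 := by
      have h := hTw z
      have : ⟪Tw z, y⟫ = ∑ i, ⟪u i, z⟫ * ⟪u i, y⟫ := by
        rw [h, sum_inner]
        simp only [real_inner_smul_left]
      rw [hTz, real_inner_self_eq_norm_sq] at this
      exact this.symm
    have h2 : ∑ i, ⟪u i, z⟫ ^ 2 = ⟪y, z⟫ := by
      have h := hTw z
      have : ⟪Tw z, z⟫ = ∑ i, ⟪u i, z⟫ * ⟪u i, z⟫ := by
        rw [h, sum_inner]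
        simp only [real_inner_smul_left]
      rw [hTz] at this
      simpa [sq] using this.symm
    have h3 : ⟪y, z⟫ ≤ ‖Sw‖ * ‖y‖ ^ 2 := by
      calc ⟪y, z⟫ ≤ ‖y‖ * ‖z‖ := real_inner_le_norm y z
        _ ≤ ‖y‖ * (‖Sw‖ * ‖y‖) := by
            have := Sw.le_opNorm y
            have h0 : (0:ℝ) ≤ ‖y‖ := norm_nonneg y
            nlinarith [this]
        _ = ‖Sw‖ * ‖y‖ ^ 2 := by ring
    have hCS := Finset.sum_mul_sq_le_sq_mul_sq Finset.univ
      (fun i => ⟪u i, z⟫) (fun i => ⟪u i, y⟫)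
    rw [h1, h2] at hCS
    have hQ : (0:ℝ) ≤ ∑ i, ⟪u i, y⟫ ^ 2 := Finset.sum_nonneg fun i _ => sq_nonneg _
    rcases eq_or_lt_of_le (norm_nonneg y) with h0 | h0
    · have hy2 : ‖y‖ ^ 2 = 0 := by rw [← h0]; ring
      rw [hy2]
      positivity
    · have h02 : 0 < ‖y‖ ^ 2 := by positivity
      nlinarith [hCS, mul_le_mul_of_nonneg_right h3 hQ, h02]
  have hK1 : (1:ℝ) ≤ K := by
    set y := EuclideanSpace.single (⟨0, hd⟩ : Fin d) (1:ℝ) with hy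
    have hny : ‖y‖ = 1 := by
      rw [hy, EuclideanSpace.norm_single]; norm_num
    have h1 := hC y
    rw [hny] at h1
    have h2 : ∑ i, ⟪u i, y⟫ ^ 2 ≤ (n:ℝ) := by
      calc ∑ i, ⟪u i, y⟫ ^ 2 ≤ ∑ _i : Fin n, (1:ℝ) := by
            apply Finset.sum_le_sum
            intro i _
            have hab := abs_real_inner_le_norm (u i) y
            rw [hun, hny, one_mul] at hab
            calc ⟪u i, y⟫ ^ 2 = |⟪u i, y⟫| ^ 2 := (sq_abs _).symm
              _ ≤ 1 := by nlinarith [abs_nonneg ⟪u i, y⟫]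
        _ = (n:ℝ) := by simp
    have hSw0 : (0:ℝ) ≤ ‖Sw‖ := norm_nonneg _
    rw [hKn]
    nlinarith [h1, h2, hSw0]
  have hKpos : (0:ℝ) < K := lt_of_lt_of_le zero_lt_one hK1
  have hSwpos : (0:ℝ) < ‖Sw‖ := by
    by_contra h
    push_neg at h
    nlinarith [hKn, hK1, hn']
  set w : ℝ := ‖Sw‖ with hw
  -- residuals
  set e : Fin n → ℝ := fun i => (⟪a i, xstarw⟫ - b i) / ‖a i‖ with he
  set S : ℝ := ∑ i, e i ^ 2 with hS
  have hrwS : rw = S / n := by rw [hrw, hS]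
  have hS0 : (0:ℝ) ≤ S := by
    rw [hS]; exact Finset.sum_nonneg fun i _ => sq_nonneg _
  have hrw0 : (0:ℝ) ≤ rw := by
    rw [hrwS]; exact div_nonneg hS0 hn'.le
  -- (B) optimality: ∑ e i • u i = 0
  have hopt : ∑ i, e i • u i = 0 := by
    by_contra hg
    set g : EuclideanSpace ℝ (Fin d) := ∑ i, e i • u i with hgdef
    have hG : (0:ℝ) < ‖g‖ ^ 2 := pow_pos (norm_pos_iff.mpr hg) 2
    set C : ℝ := ∑ i, ⟪u i, g⟫ ^ 2 with hCdef
    have hC0 : (0:ℝ) ≤ C := Finset.sum_nonneg fun i _ => sq_nonneg _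
    have hEW : ∑ i, e i * ⟪u i, g⟫ = ‖g‖ ^ 2 := by
      have : ⟪g, g⟫ = ∑ i, e i * ⟪u i, g⟫ := by
        rw [hgdef, sum_inner]
        simp only [real_inner_smul_left]
      rw [← real_inner_self_eq_norm_sq, this]
    have hexp : ∀ s : ℝ,
        Fw (xstarw + s • g) = Fw xstarw + s * ‖g‖ ^ 2 + s ^ 2 / 2 * C := by
      intro s
      rw [hFw, hFw]
      have hterm : ∀ i, ((⟪a i, xstarw + s • g⟫ - b i) / ‖a i‖) ^ 2
          = (e i + s * ⟪u i, g⟫) ^ 2 := by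
        intro i
        have hna : ‖a i‖ ≠ 0 := norm_ne_zero_iff.2 (ha i)
        have hug : ⟪u i, g⟫ = ‖a i‖⁻¹ * ⟪a i, g⟫ := by
          rw [hu, real_inner_smul_left]
        have : (⟪a i, xstarw + s • g⟫ - b i) / ‖a i‖ = e i + s * ⟪u i, g⟫ := by
          rw [inner_add_right, real_inner_smul_right, hug, he]
          field_simp
          ring
        rw [this]
      simp_rw [hterm]
      have hexpand : ∀ i : Fin n, (e i + s * ⟪u i, g⟫) ^ 2
          = e i ^ 2 + 2 * s * (e i * ⟪u i, g⟫) + s ^ 2 * ⟪u i, g⟫ ^ 2 := by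
        intro i; ring
      simp_rw [hexpand]
      rw [Finset.sum_add_distrib, Finset.sum_add_distrib,
        ← Finset.mul_sum, ← Finset.mul_sum, hEW]
      have heidem : ∀ i : Fin n, ((⟪a i, xstarw⟫ - b i) / ‖a i‖) ^ 2 = e i ^ 2 :=
        fun i => rfl
      simp_rw [heidem]
      rw [← hCdef]
      ring
    have hkey : ∀ s : ℝ, 0 ≤ s * ‖g‖ ^ 2 + s ^ 2 / 2 * C := by
      intro s
      have := hmin (xstarw + s • g)
      rw [hexp s] at this
      linarith
    have hC1 : (0:ℝ) < C + 1 := by linarith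
    have hval := hkey (-(‖g‖ ^ 2) / (C + 1))
    have heq : (-(‖g‖ ^ 2) / (C + 1)) * ‖g‖ ^ 2 + (-(‖g‖ ^ 2) / (C + 1)) ^ 2 / 2 * C
        = (‖g‖ ^ 2) ^ 2 * (-(C + 2)) / (2 * (C + 1) ^ 2) := by
      field_simp
      ring
    rw [heq] at hval
    have hneg : (‖g‖ ^ 2) ^ 2 * (-(C + 2)) / (2 * (C + 1) ^ 2) < 0 := by
      apply div_neg_of_neg_of_pos
      · nlinarith [hG]
      · positivity
    linarith
  -- cross term vanishes against any vector
  have hcross : ∀ y : EuclideanSpace ℝ (Fin d), ∑ i, e i * ⟪u i, y⟫ = 0 := by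
    intro y
    have : ⟪∑ i, e i • u i, y⟫ = ∑ i, e i * ⟪u i, y⟫ := by
      rw [sum_inner]
      simp only [real_inner_smul_left]
    rw [hopt] at this
    simpa using this.symm
  -- abbreviations for the rates
  set q : ℝ := 1 - c * (2 - c) / K with hq
  set p : ℝ := 1 - 2 * c * (1 - c) / K with hp
  set H : ℝ := (c / (1 - c)) * K * rw with hH
  clear_value q p H
  -- (E) one-step inequality
  have hstep : ∀ x : EuclideanSpace ℝ (Fin d),
      ∑ i, ‖x + c • (((b i - ⟪a i, x⟫) / ‖a i‖ ^ 2) • a i) - xstarw‖ ^ 2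
        ≤ (n : ℝ) * (q * ‖x - xstarw‖ ^ 2) + c ^ 2 * S := by
    intro x
    set y := x - xstarw with hy
    have hupd : ∀ i, x + c • (((b i - ⟪a i, x⟫) / ‖a i‖ ^ 2) • a i) - xstarw
        = y - (c * (⟪u i, y⟫ + e i)) • u i := by
      intro i
      have hna : ‖a i‖ ≠ 0 := norm_ne_zero_iff.2 (ha i)
      have hiy : ⟪u i, y⟫ = ‖a i‖⁻¹ * (⟪a i, x⟫ - ⟪a i, xstarw⟫) := by
        rw [hu, real_inner_smul_left, hy, inner_sub_right]
      have h1 : ((b i - ⟪a i, x⟫) / ‖a i‖ ^ 2) • a i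
          = (-(⟪u i, y⟫ + e i)) • u i := by
        rw [hu, smul_smul]
        congr 1
        rw [real_inner_smul_left, hy, inner_sub_right]
        simp only [he]
        generalize ⟪a i, x⟫ = A
        generalize ⟪a i, xstarw⟫ = B
        field_simp
        ring
      rw [h1, hy]
      module
    simp_rw [hupd]
    have hterm : ∀ i, ‖y - (c * (⟪u i, y⟫ + e i)) • u i‖ ^ 2
        = ‖y‖ ^ 2 + (c ^ 2 - 2 * c) * ⟪u i, y⟫ ^ 2
          + (2 * c ^ 2 - 2 * c) * (e i * ⟪u i, y⟫) + c ^ 2 * e i ^ 2 := by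
      intro i
      rw [norm_sub_sq_real, real_inner_smul_right, norm_smul, hun, mul_one,
        Real.norm_eq_abs, sq_abs, real_inner_comm y (u i)]
      ring
    simp_rw [hterm]
    rw [Finset.sum_add_distrib, Finset.sum_add_distrib, Finset.sum_add_distrib,
      Finset.sum_const, ← Finset.mul_sum, ← Finset.mul_sum, ← Finset.mul_sum,
      hcross y, ← hS]
    simp only [Finset.card_univ, Fintype.card_fin, nsmul_eq_mul, mul_zero, add_zero]
    -- now a purely scalar inequality
    set Q : ℝ := ∑ i, ⟪u i, y⟫ ^ 2 with hQdef
    have hQ0 : (0:ℝ) ≤ Q := Finset.sum_nonneg fun i _ => sq_nonneg _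
    have hCKy : (n:ℝ) * ‖y‖ ^ 2 ≤ K * Q := by
      calc (n:ℝ) * ‖y‖ ^ 2 ≤ (n:ℝ) * (w * Q) :=
            mul_le_mul_of_nonneg_left (hC y) hn'.le
        _ = K * Q := by rw [hKn]; ring
    have hc2 : (0:ℝ) < c * (2 - c) := by nlinarith
    have hKi : K⁻¹ * K = 1 := inv_mul_cancel₀ (ne_of_gt hKpos)
    have h11 : c * (2 - c) * K⁻¹ * ((n:ℝ) * ‖y‖ ^ 2) ≤ c * (2 - c) * K⁻¹ * (K * Q) := by
      apply mul_le_mul_of_nonneg_left hCKy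
      have : (0:ℝ) < K⁻¹ := by positivity
      positivity
    have h12 : c * (2 - c) * K⁻¹ * (K * Q) = c * (2 - c) * Q := by
      calc c * (2 - c) * K⁻¹ * (K * Q) = c * (2 - c) * Q * (K⁻¹ * K) := by ring
        _ = c * (2 - c) * Q := by rw [hKi, mul_one]
    have h13 : (n:ℝ) * (q * ‖y‖ ^ 2)
        = (n:ℝ) * ‖y‖ ^ 2 - c * (2 - c) * K⁻¹ * ((n:ℝ) * ‖y‖ ^ 2) := by
      rw [hq, div_eq_mul_inv]; ring
    rw [h13]
    linarith [h11, h12]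
  -- the trajectory splitting
  have htr : ∀ k (s' : Fin k → Fin n) (i : Fin n),
      traj (k + 1) (Fin.snoc s' i)
        = traj k s' + c • (((b i - ⟪a i, traj k s'⟫) / ‖a i‖ ^ 2) • a i) := by
    intro k s' i
    have h1 : (Fin.snoc s' i : Fin (k + 1) → Fin n) ∘ Fin.castSucc = s' := by
      funext j
      simp [Fin.snoc_castSucc]
    have h2 : (Fin.snoc s' i : Fin (k + 1) → Fin n) (Fin.last k) = i :=
      Fin.snoc_last _ _
    rw [htrajS, h1, h2]
  -- main induction
  have main : ∀ k : ℕ,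
      ∑ s : Fin k → Fin n, (1 / (n:ℝ)) ^ k * ‖traj k s - xstarw‖ ^ 2
        ≤ p ^ k * ‖x0 - xstarw‖ ^ 2 + H := by
    have hq0 : (0:ℝ) ≤ q := by
      rw [hq, sub_nonneg, div_le_one hKpos]
      nlinarith [hK1]
    have hqp : q ≤ p := by
      rw [hq, hp, sub_le_sub_iff_left]
      exact div_le_div_of_nonneg_right (by nlinarith [sq_nonneg c]) hKpos.le
    have hp0 : (0:ℝ) ≤ p := le_trans hq0 hqp
    have hH0 : (0:ℝ) ≤ H := by
      rw [hH]
      have : (0:ℝ) ≤ c / (1 - c) := by positivity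
      positivity
    have hqH : q * H + c ^ 2 * rw ≤ H := by
      have hkey : (1 - q) * H = c ^ 2 * (2 - c) / (1 - c) * rw := by
        rw [hq, hH]
        field_simp [ne_of_gt hKpos, ne_of_gt h1c]
        ring
      have h2 : c ^ 2 * rw ≤ c ^ 2 * (2 - c) / (1 - c) * rw := by
        rw [div_mul_eq_mul_div, le_div_iff₀ h1c]
        nlinarith [mul_nonneg (sq_nonneg c) hrw0]
      nlinarith [hkey, h2]
    intro k
    induction k with
    | zero =>
      have hbase : ∑ s : Fin 0 → Fin n, (1 / (n:ℝ)) ^ 0 * ‖traj 0 s - xstarw‖ ^ 2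
          = ‖x0 - xstarw‖ ^ 2 := by
        rw [Fintype.sum_unique]
        simp [htraj0]
      rw [hbase]
      simp only [pow_zero, one_mul]
      linarith
    | succ k ih =>
      have hsplit : ∑ s : Fin (k + 1) → Fin n,
            (1 / (n:ℝ)) ^ (k + 1) * ‖traj (k + 1) s - xstarw‖ ^ 2
          = ∑ pr : Fin n × (Fin k → Fin n),
            (1 / (n:ℝ)) ^ (k + 1) * ‖traj (k + 1) (Fin.snoc pr.2 pr.1) - xstarw‖ ^ 2 := by
        apply Fintype.sum_equiv (Fin.snocEquiv (fun _ => Fin n)).symm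
        intro s
        have h2 : Fin.snoc (((Fin.snocEquiv fun _ => Fin n).symm s).2)
            (((Fin.snocEquiv fun _ => Fin n).symm s).1) = s := by
          simp [Fin.snocEquiv, Fin.snoc_init_self]
        rw [h2]
      rw [hsplit, Fintype.sum_prod_type_right]
      have hbound : ∀ s' : Fin k → Fin n,
          ∑ i : Fin n, (1 / (n:ℝ)) ^ (k + 1)
              * ‖traj (k + 1) (Fin.snoc s' i) - xstarw‖ ^ 2
            ≤ q * ((1 / (n:ℝ)) ^ k * ‖traj k s' - xstarw‖ ^ 2)
              + (1 / (n:ℝ)) ^ (k + 1) * (c ^ 2 * S) := by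
        intro s'
        have := hstep (traj k s')
        have hpow : (0:ℝ) ≤ (1 / (n:ℝ)) ^ (k + 1) := by positivity
        calc ∑ i : Fin n, (1 / (n:ℝ)) ^ (k + 1)
              * ‖traj (k + 1) (Fin.snoc s' i) - xstarw‖ ^ 2
            = (1 / (n:ℝ)) ^ (k + 1) * ∑ i : Fin n,
              ‖traj k s' + c • (((b i - ⟪a i, traj k s'⟫) / ‖a i‖ ^ 2) • a i)
                - xstarw‖ ^ 2 := by
              rw [Finset.mul_sum]
              apply Finset.sum_congr rfl
              intro i _
              rw [htr k s' i]
          _ ≤ (1 / (n:ℝ)) ^ (k + 1)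
              * ((n : ℝ) * (q * ‖traj k s' - xstarw‖ ^ 2) + c ^ 2 * S) :=
              mul_le_mul_of_nonneg_left this hpow
          _ = q * ((1 / (n:ℝ)) ^ k * ‖traj k s' - xstarw‖ ^ 2)
              + (1 / (n:ℝ)) ^ (k + 1) * (c ^ 2 * S) := by
              have hne : (n:ℝ) ≠ 0 := ne_of_gt hn'
              field_simp
              have h1n : 1 / (n:ℝ) * n = 1 := by rw [one_div, inv_mul_cancel₀ hne]
              linear_combination (q * ‖traj k s' - xstarw‖ ^ 2 * (1 / (n:ℝ)) ^ k) * h1n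
      calc ∑ s' : Fin k → Fin n, ∑ i : Fin n, (1 / (n:ℝ)) ^ (k + 1)
              * ‖traj (k + 1) (Fin.snoc s' i) - xstarw‖ ^ 2
          ≤ ∑ s' : Fin k → Fin n,
            (q * ((1 / (n:ℝ)) ^ k * ‖traj k s' - xstarw‖ ^ 2)
              + (1 / (n:ℝ)) ^ (k + 1) * (c ^ 2 * S)) :=
            Finset.sum_le_sum fun s' _ => hbound s'
        _ = q * (∑ s' : Fin k → Fin n,
              (1 / (n:ℝ)) ^ k * ‖traj k s' - xstarw‖ ^ 2) + c ^ 2 * rw := by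
            rw [Finset.sum_add_distrib, ← Finset.mul_sum, Finset.sum_const,
              Finset.card_univ]
            congr 1
            have hcard : Fintype.card (Fin k → Fin n) = n ^ k := by
              simp [Fintype.card_fun]
            rw [hcard, nsmul_eq_mul, hrwS]
            have hne : (n:ℝ) ≠ 0 := ne_of_gt hn'
            push_cast
            field_simp
            rw [← pow_succ, ← mul_pow, mul_one_div_cancel hne, one_pow, one_mul]
        _ ≤ q * (p ^ k * ‖x0 - xstarw‖ ^ 2 + H) + c ^ 2 * rw := by
            have := mul_le_mul_of_nonneg_left ih hq0
            linarith
        _ ≤ p ^ (k + 1) * ‖x0 - xstarw‖ ^ 2 + H := by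
            have hpk : (0:ℝ) ≤ p ^ k := pow_nonneg hp0 k
            have hE0 : (0:ℝ) ≤ ‖x0 - xstarw‖ ^ 2 := sq_nonneg _
            have hmul : q * (p ^ k * ‖x0 - xstarw‖ ^ 2)
                ≤ p * (p ^ k * ‖x0 - xstarw‖ ^ 2) :=
              mul_le_mul_of_nonneg_right hqp (mul_nonneg hpk hE0)
            have hps : p ^ (k + 1) = p * p ^ k := by rw [pow_succ]; ring
            nlinarith [hmul, hqH]
  intro k
  have hprod : (∏ _j : Fin k, (1 / (n : ℝ))) = (1 / (n:ℝ)) ^ k := by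
    simp
  simp_rw [hprod]
  exact main k
end

section
/- There exists a family of strongly convex smooth problems on which no SGD-type method sampling from the unweighted source distribution can have iteration complexity linear in the average conditioning L̄/μ: for the uniform distribution over the N+1 quadratics f_1(x) = (N/2)(x₁ - b)², f_i(x) = (1/2)x₂² for i ≥ 2, with b = ±1, one has sup L_i = N, L̄ = 2N/(N+1) < 2, μ = N/(N+1), yet any algorithm accessing the f_i only via uniformly sampled indices requires at least N+1 samples in expectation before it first samples index 1, and until then its expected squared error E‖x - x⋆‖² is at least 1 (since x⋆ = (b, 0) depends on the unseen b). -/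
open scoped RealInnerProductSpace BigOperators

lemma grad_quad (c : ℝ) (a x : EuclideanSpace ℝ (Fin 2)) :
    HasGradientAt (fun y => c * ‖y - a‖ ^ 2) ((2 * c) • (x - a)) x := by
  rw [hasGradientAt_iff_hasFDerivAt]
  have h1 : HasFDerivAt (fun y : EuclideanSpace ℝ (Fin 2) => y - a)
      (ContinuousLinearMap.id ℝ (EuclideanSpace ℝ (Fin 2))) x :=
    (hasFDerivAt_id x).sub_const a
  have h3 := h1.norm_sq.const_mul c
  refine h3.congr_fderiv ?_
  ext w
  simp [InnerProductSpace.toDual_apply_apply, real_inner_smul_left, real_inner_comm]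
  ring

lemma norm_sq_two (v : EuclideanSpace ℝ (Fin 2)) : ‖v‖ ^ 2 = (v 0) ^ 2 + (v 1) ^ 2 := by
  rw [EuclideanSpace.norm_eq, Real.sq_sqrt (by positivity)]
  simp [Fin.sum_univ_two, Real.norm_eq_abs, sq_abs]

/-- Tightness example: for the uniform distribution over the `N+1` quadratics
`f_1(x) = (N/2)(x₁-b)²`, `f_i(x) = (1/2)x₂²` (`i ≥ 2`), with `b = ±1`:
`sup L_i = N`, `L̄ = 2N/(N+1)`, `F` is `μ`-strongly convex with `μ = N/(N+1)`;
the first time a uniform i.i.d. sample from `{1,…,N+1}` equals the index `1`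
has expectation `N+1`; and any estimator chosen independently of `b` has
worst-case (over `b = ±1`) squared error at least `1`, since `x⋆ = (b,0)`.
Hence no method sampling uniformly can have iteration complexity linear in
`L̄/μ = 2`. -/
theorem stmt17 (N : ℕ) (hN : 1 ≤ N)
    (L : Fin (N + 1) → ℝ) (hL : ∀ i, L i = if i = 0 then (N : ℝ) else 1)
    (f : ℝ → Fin (N + 1) → EuclideanSpace ℝ (Fin 2) → ℝ)
    (hf : ∀ b i x, f b i x =
      if i = 0 then ((N : ℝ) / 2) * (x 0 - b) ^ 2 else (1 / 2) * (x 1) ^ 2)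
    (F : ℝ → EuclideanSpace ℝ (Fin 2) → ℝ)
    (hF : ∀ b x, F b x = (1 / ((N : ℝ) + 1)) * ∑ i, f b i x)
    (μ : ℝ) (hμ : μ = (N : ℝ) / ((N : ℝ) + 1))
    (xs : ℝ → EuclideanSpace ℝ (Fin 2))
    (hxs : ∀ b, xs b 0 = b ∧ xs b 1 = 0) :
    -- sup of the Lipschitz constants is N
    (⨆ i, L i) = (N : ℝ) ∧
    -- the average Lipschitz constant is 2N/(N+1) < 2
    (∑ i, (1 / ((N : ℝ) + 1)) * L i) = 2 * (N : ℝ) / ((N : ℝ) + 1) ∧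
    -- F is μ-strongly convex with μ = N/(N+1), for either value of b
    (∀ b : ℝ, b = 1 ∨ b = -1 →
      ∀ x y, μ * ‖x - y‖ ^ 2 ≤ ⟪x - y, gradient (F b) x - gradient (F b) y⟫) ∧
    -- x⋆ = (b,0) minimizes F b
    (∀ b : ℝ, b = 1 ∨ b = -1 → ∀ x, F b (xs b) ≤ F b x) ∧
    -- the expected first time a uniform i.i.d. sample from {1,…,N+1} equals
    -- the distinguished index is N+1 (geometric distribution)
    (∑' k : ℕ, ((k : ℝ) + 1) * ((N : ℝ) / ((N : ℝ) + 1)) ^ k *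
        (1 / ((N : ℝ) + 1))) = (N : ℝ) + 1 ∧
    -- any estimate independent of b has worst-case squared error at least 1
    (∀ x : EuclideanSpace ℝ (Fin 2), 1 ≤ max (‖x - xs 1‖ ^ 2) (‖x - xs (-1)‖ ^ 2)) := by
  have hN1 : (0:ℝ) < (N:ℝ) + 1 := by positivity
  have hNpos : (0:ℝ) < (N:ℝ) := by exact_mod_cast Nat.lt_of_lt_of_le Nat.zero_lt_one hN
  -- sum of f's
  have hsum : ∀ b (y : EuclideanSpace ℝ (Fin 2)),
      ∑ i, f b i y = ((N:ℝ)/2) * (y 0 - b)^2 + (N:ℝ) * ((1/2) * (y 1)^2) := by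
    intro b y
    have h0 : f b 0 y = ((N:ℝ)/2) * (y 0 - b)^2 := by rw [hf]; simp
    have hi : ∀ i : Fin N, f b i.succ y = (1/2) * (y 1)^2 := by
      intro i; rw [hf, if_neg (Fin.succ_ne_zero i)]
    rw [Fin.sum_univ_succ, h0, Finset.sum_congr rfl fun i _ => hi i, Finset.sum_const]
    simp [nsmul_eq_mul]
  -- F as quadratic
  have hFeq : ∀ b, F b = fun y => ((N:ℝ)/(2*((N:ℝ)+1))) * ‖y - xs b‖ ^ 2 := by
    intro b
    funext y
    rw [hF, hsum, norm_sq_two]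
    have h0 : (y - xs b) 0 = y 0 - b := by
      simp [PiLp.sub_apply, (hxs b).1]
    have h1 : (y - xs b) 1 = y 1 := by
      simp [PiLp.sub_apply, (hxs b).2]
    rw [h0, h1]
    field_simp
  have hgrad : ∀ b x, gradient (F b) x = μ • (x - xs b) := by
    intro b x
    rw [hFeq b]
    have := (grad_quad ((N:ℝ)/(2*((N:ℝ)+1))) (xs b) x).gradient
    rw [this, hμ]
    congr 1
    field_simp
  refine ⟨?_, ?_, ?_, ?_, ?_, ?_⟩
  · -- sup
    apply le_antisymm
    · apply ciSup_le
      intro i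
      rw [hL]
      split
      · exact le_rfl
      · exact_mod_cast hN
    · have := le_ciSup (Set.Finite.bddAbove (Set.finite_range L)) (0 : Fin (N+1))
      rw [hL 0, if_pos rfl] at this
      exact this
  · -- average
    rw [Fin.sum_univ_succ]
    rw [hL 0, if_pos rfl]
    rw [Finset.sum_congr rfl (fun i _ => by rw [hL, if_neg (Fin.succ_ne_zero i)])]
    simp only [Finset.sum_const, Finset.card_univ, Fintype.card_fin, nsmul_eq_mul]
    field_simp
    ring
  · -- strong convexity
    intro b _ x y
    rw [hgrad, hgrad, ← smul_sub, sub_sub_sub_cancel_right, real_inner_smul_right,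
      real_inner_self_eq_norm_sq]
  · -- minimizer
    intro b _ x
    rw [hFeq b]
    simp only [sub_self, norm_zero, ne_eq, OfNat.ofNat_ne_zero, not_false_eq_true,
      zero_pow, mul_zero]
    positivity
  · -- tsum
    set r : ℝ := (N:ℝ)/((N:ℝ)+1) with hr
    have hr0 : 0 ≤ r := by positivity
    have hr1 : r < 1 := by rw [hr, div_lt_one hN1]; linarith
    have hrn : ‖r‖ < 1 := by rwa [Real.norm_eq_abs, abs_of_nonneg hr0]
    have hs1 : Summable (fun k : ℕ => (k:ℝ) * r ^ k) := by
      simpa using summable_pow_mul_geometric_of_norm_lt_one 1 hrn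
    have hs2 : Summable (fun k : ℕ => r ^ k) := summable_geometric_of_lt_one hr0 hr1
    have key : ∑' k : ℕ, ((k:ℝ) + 1) * r ^ k * (1/((N:ℝ)+1))
        = (∑' k : ℕ, (k:ℝ) * r ^ k + ∑' k : ℕ, r ^ k) * (1/((N:ℝ)+1)) := by
      rw [tsum_mul_right, ← Summable.tsum_add hs1 hs2]
      congr 1
      exact tsum_congr fun k => by ring
    rw [key, tsum_coe_mul_geometric_of_norm_lt_one hrn, tsum_geometric_of_lt_one hr0 hr1]
    have h1r : 1 - r = 1/((N:ℝ)+1) := by rw [hr]; field_simp; ring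
    rw [h1r]
    have hne : ((N:ℝ)+1) ≠ 0 := ne_of_gt hN1
    have hne' : (1+(N:ℝ)) ≠ 0 := by linarith
    rw [hr]
    field_simp
  · -- estimator lower bound
    intro x
    have h1 : ‖x - xs 1‖ ^ 2 = (x 0 - 1)^2 + (x 1)^2 := by
      rw [norm_sq_two]
      simp [PiLp.sub_apply, (hxs 1).1, (hxs 1).2]
    have h2 : ‖x - xs (-1)‖ ^ 2 = (x 0 + 1)^2 + (x 1)^2 := by
      rw [norm_sq_two]
      simp [PiLp.sub_apply, (hxs (-1)).1, (hxs (-1)).2, sub_neg_eq_add]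
    rw [h1, h2]
    rcases le_total (x 0) 0 with h | h
    · refine le_max_left _ _ |>.trans' ?_
      nlinarith [sq_nonneg (x 1), sq_nonneg (x 0)]
    · refine le_max_right _ _ |>.trans' ?_
      nlinarith [sq_nonneg (x 1), sq_nonneg (x 0)]
end
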